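/- arXiv:2410.12576 — 4 statements merged into one kernel-verified Lean document; each statement's English description precedes it below -/
import Mathlib

section
/- Let ρ, σ be quantum states on H and suppose H decomposes as an orthogonal direct sum H = ⊕_{i∈I} H_i with projections Π_i, and σ = Σ_i σ_i with supp(σ_i) ⊆ H_i. Then F(Σ_i Π_i ρ Π_i, σ) ≤ √|I| · F(ρ, σ). -/
open scoped Matrix ComplexOrder

noncomputable section
open Classical

namespace QD

variable {n : Type*} [Fintype n] [DecidableEq n]

/-- Apply a real function to a Hermitian matrix via its spectral decomposition;
junk value `0` on non-Hermitian input. -/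
def mfun (f : ℝ → ℝ) (A : Matrix n n ℂ) : Matrix n n ℂ :=
  if hA : A.IsHermitian then
    (hA.eigenvectorUnitary : Matrix n n ℂ) *
      Matrix.diagonal (fun i => (f (hA.eigenvalues i) : ℂ)) *
      (star (hA.eigenvectorUnitary : Matrix n n ℂ))
  else 0

/-- Matrix logarithm (base 2) taken on the support. -/
def mlog (A : Matrix n n ℂ) : Matrix n n ℂ := mfun (fun x => Real.logb 2 x) A

/-- Real power of a positive semidefinite matrix, taken on the support. -/
def mpow (A : Matrix n n ℂ) (c : ℝ) : Matrix n n ℂ :=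
  mfun (fun x => if x = 0 then 0 else x ^ c) A

/-- Trace (Schatten-1) norm. -/
def traceNorm (A : Matrix n n ℂ) : ℝ := ((mfun Real.sqrt (Aᴴ * A)).trace).re

/-- Fidelity `F(ρ,σ) = ‖√ρ√σ‖₁`. -/
def fid (ρ σ : Matrix n n ℂ) : ℝ := traceNorm (mfun Real.sqrt ρ * mfun Real.sqrt σ)

/-- Purified distance. -/
def purD (ρ σ : Matrix n n ℂ) : ℝ := Real.sqrt (1 - (fid ρ σ) ^ 2)

/-- Trace distance. -/
def trD (ρ σ : Matrix n n ℂ) : ℝ := traceNorm (ρ - σ) / 2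

/-- `suppLE ρ σ` means `supp ρ ⊆ supp σ` (equivalently `ker σ ⊆ ker ρ` for PSD matrices). -/
def suppLE (ρ σ : Matrix n n ℂ) : Prop := ∀ v : n → ℂ, σ.mulVec v = 0 → ρ.mulVec v = 0

/-- Umegaki relative entropy (base-2 logarithm), as a real number. -/
def relEnt (τ ρ : Matrix n n ℂ) : ℝ := ((τ * (mlog τ - mlog ρ)).trace).re

/-- Umegaki relative entropy with the value `⊤` when the support condition fails. -/
def relEntE (τ ρ : Matrix n n ℂ) : EReal :=
  if suppLE τ ρ then ((relEnt τ ρ : ℝ) : EReal) else ⊤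

/-- von Neumann entropy (base-2 logarithm). -/
def vnEnt (τ : Matrix n n ℂ) : ℝ := -((τ * mlog τ).trace).re

/-- The sandwiched Rényi quantity `Q*_α`. -/
def Qstar (α : ℝ) (ρ σ : Matrix n n ℂ) : ℝ :=
  ((mfun (fun x => if x = 0 then 0 else x ^ α)
      (mpow σ ((1 - α)/(2*α)) * ρ * mpow σ ((1 - α)/(2*α)))).trace).re

/-- The sandwiched Rényi divergence of order `α`. -/
def Dstar (α : ℝ) (ρ σ : Matrix n n ℂ) : ℝ := (α - 1)⁻¹ * Real.logb 2 (Qstar α ρ σ)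

/-- The sandwiched Rényi divergence with the `+∞` conventions. -/
def DstarE (α : ℝ) (ρ σ : Matrix n n ℂ) : EReal :=
  if (α < 1 ∧ 0 < Qstar α ρ σ) ∨ (1 < α ∧ suppLE ρ σ) ∨ α = 1 then
    ((Dstar α ρ σ : ℝ) : EReal) else ⊤

/-- The Petz Rényi divergence of order `β`. -/
def Dpetz (β : ℝ) (ρ σ : Matrix n n ℂ) : ℝ :=
  (β - 1)⁻¹ * Real.logb 2 (((mpow ρ β * mpow σ (1 - β)).trace).re)

/-- The log-Euclidean Rényi quantity `Q♭_α = Tr 2^{α log ρ + (1-α) log σ}`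
(with supports handled via the Lie–Trotter limit). -/
def Qflat (α : ℝ) (ρ σ : Matrix n n ℂ) : ℝ :=
  Filter.limUnder Filter.atTop
    (fun k : ℕ => (((mpow ρ (α / k) * mpow σ ((1 - α) / k)) ^ k).trace).re)

/-- The log-Euclidean Rényi divergence of order `α`. -/
def Dflat (α : ℝ) (ρ σ : Matrix n n ℂ) : ℝ := (α - 1)⁻¹ * Real.logb 2 (Qflat α ρ σ)

/-- The log-Euclidean Rényi divergence with the `+∞` convention. -/
def DflatE (α : ℝ) (ρ σ : Matrix n n ℂ) : EReal :=
  if 0 < Qflat α ρ σ then ((Dflat α ρ σ : ℝ) : EReal) else ⊤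

/-- The pinching channel associated with (the spectral projections of) `σ`. -/
def pinch (σ X : Matrix n n ℂ) : Matrix n n ℂ :=
  if hσ : σ.IsHermitian then
    ∑ lam ∈ Finset.univ.image hσ.eigenvalues,
      mfun (fun x => if x = lam then 1 else 0) σ * X *
        mfun (fun x => if x = lam then 1 else 0) σ
  else X

/-- The number of distinct eigenvalues `v(σ)`. -/
def numEig (σ : Matrix n n ℂ) : ℕ :=
  if hσ : σ.IsHermitian then (Finset.univ.image hσ.eigenvalues).card else 1

/-- Trace of the positive part of a Hermitian matrix. -/
def posPartTrace (A : Matrix n n ℂ) : ℝ := ((mfun (fun x => max x 0) A).trace).re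

/-- Binary entropy (base 2). -/
def binEnt (x : ℝ) : ℝ := -(x * Real.logb 2 x) - (1 - x) * Real.logb 2 (1 - x)

/-- A quantum state: positive semidefinite with unit trace. -/
def IsState (ρ : Matrix n n ℂ) : Prop := ρ.PosSemidef ∧ ρ.trace = 1

end QD

namespace QDAux
open Matrix QD

variable {n : Type*} [Fintype n] [DecidableEq n]

lemma mfun_def (f : ℝ → ℝ) {A : Matrix n n ℂ} (hA : A.IsHermitian) :
    mfun f A = (hA.eigenvectorUnitary : Matrix n n ℂ) *
      Matrix.diagonal (fun i => (f (hA.eigenvalues i) : ℂ)) *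
      (star (hA.eigenvectorUnitary : Matrix n n ℂ)) := dif_pos hA

lemma mfun_isHermitian (f : ℝ → ℝ) {A : Matrix n n ℂ} (hA : A.IsHermitian) :
    (mfun f A).IsHermitian := by
  rw [mfun_def f hA]
  have hd : (Matrix.diagonal (fun i => (f (hA.eigenvalues i) : ℂ))).IsHermitian := by
    rw [Matrix.isHermitian_diagonal_iff]
    intro i
    exact Complex.conj_ofReal _
  unfold Matrix.IsHermitian
  simp only [Matrix.conjTranspose_mul, Matrix.star_eq_conjTranspose, hd.eq,
    Matrix.conjTranspose_conjTranspose, Matrix.mul_assoc]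

lemma mfun_mul_mfun (f g : ℝ → ℝ) {A : Matrix n n ℂ} (hA : A.IsHermitian) :
    mfun f A * mfun g A = mfun (fun x => f x * g x) A := by
  rw [mfun_def f hA, mfun_def g hA, mfun_def _ hA]
  have h1 : (star (hA.eigenvectorUnitary : Matrix n n ℂ)) *
      (hA.eigenvectorUnitary : Matrix n n ℂ) = 1 := Unitary.coe_star_mul_self _
  rw [show ∀ (U D1 S D2 : Matrix n n ℂ), U * D1 * S * (U * D2 * S) = U * D1 * (S * U) * D2 * S from fun U D1 S D2 => by noncomm_ring]
  calc (hA.eigenvectorUnitary : Matrix n n ℂ) *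
        Matrix.diagonal (fun i => (f (hA.eigenvalues i) : ℂ)) *
        ((star (hA.eigenvectorUnitary : Matrix n n ℂ)) *
        (hA.eigenvectorUnitary : Matrix n n ℂ)) *
        Matrix.diagonal (fun i => (g (hA.eigenvalues i) : ℂ)) *
        (star (hA.eigenvectorUnitary : Matrix n n ℂ))
      = (hA.eigenvectorUnitary : Matrix n n ℂ) *
        (Matrix.diagonal (fun i => (f (hA.eigenvalues i) : ℂ)) *
        Matrix.diagonal (fun i => (g (hA.eigenvalues i) : ℂ))) *
        (star (hA.eigenvectorUnitary : Matrix n n ℂ)) := by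
        rw [h1]; noncomm_ring
    _ = _ := by rw [Matrix.diagonal_mul_diagonal]; norm_cast

lemma trace_mfun_re (f : ℝ → ℝ) {A : Matrix n n ℂ} (hA : A.IsHermitian) :
    ((mfun f A).trace).re = ∑ i, f (hA.eigenvalues i) := by
  rw [mfun_def f hA, Matrix.trace_mul_cycle, Unitary.coe_star_mul_self, Matrix.one_mul,
    Matrix.trace_diagonal]
  rw [Complex.re_sum]
  simp

lemma mfun_congr {f g : ℝ → ℝ} {A : Matrix n n ℂ} (hA : A.IsHermitian)
    (h : ∀ i, f (hA.eigenvalues i) = g (hA.eigenvalues i)) : mfun f A = mfun g A := by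
  rw [mfun_def f hA, mfun_def g hA]
  have : (fun i => (f (hA.eigenvalues i) : ℂ)) = (fun i => (g (hA.eigenvalues i) : ℂ)) :=
    funext fun i => by rw [h i]
  rw [this]

lemma mfun_id {A : Matrix n n ℂ} (hA : A.IsHermitian) : mfun (fun x => x) A = A := by
  rw [mfun_def _ hA]
  exact hA.spectral_theorem.symm

lemma mfun_posSemidef {f : ℝ → ℝ} {A : Matrix n n ℂ} (hA : A.IsHermitian)
    (hf : ∀ i, 0 ≤ f (hA.eigenvalues i)) : (mfun f A).PosSemidef := by
  rw [mfun_def f hA]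
  have hd : (Matrix.diagonal (fun i => (f (hA.eigenvalues i) : ℂ))).PosSemidef := by
    rw [Matrix.posSemidef_diagonal_iff]
    intro i
    simpa using Complex.zero_le_real.mpr (hf i)
  simpa only [Matrix.star_eq_conjTranspose] using
    hd.mul_mul_conjTranspose_same (hA.eigenvectorUnitary : Matrix n n ℂ)

end QDAux

set_option linter.unusedSectionVars false
namespace QDAux
open Matrix QD

variable {n : Type*} [Fintype n] [DecidableEq n]

lemma diagonal_mulVec_apply (d w : n → ℂ) (k : n) :
    (Matrix.diagonal d *ᵥ w) k = d k * w k := by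
  simp [Matrix.mulVec, Matrix.diagonal, dotProduct, Finset.sum_ite_eq]

lemma eq_zero_of_forall_mulVec {A : Matrix n n ℂ} (h : ∀ v, A *ᵥ v = 0) : A = 0 := by
  ext i j
  have := congrFun (h (Pi.single j 1)) i
  simpa [Matrix.mulVec_single] using this

lemma mfun_mulVec_zero {f : ℝ → ℝ} (hf : f 0 = 0) {A : Matrix n n ℂ} (hA : A.IsHermitian)
    {v : n → ℂ} (hv : A *ᵥ v = 0) : mfun f A *ᵥ v = 0 := by
  set U : Matrix n n ℂ := (hA.eigenvectorUnitary : Matrix n n ℂ) with hU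
  have hUs : star U * U = 1 := Unitary.coe_star_mul_self _
  set w : n → ℂ := star U *ᵥ v with hw
  have h2 : Matrix.diagonal (fun i => (hA.eigenvalues i : ℂ)) *ᵥ w = 0 := by
    have h3 : (Matrix.diagonal (fun i => (hA.eigenvalues i : ℂ)) * star U) *ᵥ v = 0 := by
      have h4 : star U * A = Matrix.diagonal (fun i => (hA.eigenvalues i : ℂ)) * star U := by
        conv_lhs => rw [hA.spectral_theorem, Unitary.conjStarAlgAut_apply]
        rw [show (RCLike.ofReal ∘ hA.eigenvalues : n → ℂ) =
          (fun i => (hA.eigenvalues i : ℂ)) from rfl]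
        rw [← Matrix.mul_assoc, ← Matrix.mul_assoc, hUs, Matrix.one_mul]
      rw [← h4, ← Matrix.mulVec_mulVec, hv, Matrix.mulVec_zero]
    rw [← Matrix.mulVec_mulVec] at h3
    exact h3
  have hcomp : ∀ k, (hA.eigenvalues k : ℂ) * w k = 0 := by
    intro k
    have := congrFun h2 k
    rwa [diagonal_mulVec_apply] at this
  have h5 : Matrix.diagonal (fun i => (f (hA.eigenvalues i) : ℂ)) *ᵥ w = 0 := by
    funext k
    rw [diagonal_mulVec_apply]
    rcases eq_or_ne (hA.eigenvalues k) 0 with h | h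
    · simp [h, hf]
    · have : w k = 0 := by
        have := hcomp k
        rcases mul_eq_zero.mp this with h' | h'
        · exact absurd (Complex.ofReal_eq_zero.mp h') h
        · exact h'
      simp [this]
  rw [mfun_def f hA, Matrix.mul_assoc, ← Matrix.mulVec_mulVec, ← Matrix.mulVec_mulVec]
  rw [show star (hA.eigenvectorUnitary : Matrix n n ℂ) *ᵥ v = w from rfl, h5,
    Matrix.mulVec_zero]

lemma mfun_mul_proj {f : ℝ → ℝ} (hf : f 0 = 0) {A P : Matrix n n ℂ} (hA : A.IsHermitian)
    (hP : P * P = P) (hs : P * A * P = A) : mfun f A * P = mfun f A := by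
  have hA1 : A * (1 - P) = 0 := by
    rw [Matrix.mul_sub, Matrix.mul_one, ← hs, Matrix.mul_assoc (P * A) P P, hP, sub_self]
  have h0 : mfun f A * (1 - P) = 0 := by
    apply eq_zero_of_forall_mulVec
    intro v
    rw [← Matrix.mulVec_mulVec]
    apply mfun_mulVec_zero hf hA
    rw [Matrix.mulVec_mulVec, hA1, Matrix.zero_mulVec]
  have h1 : mfun f A * 1 - mfun f A * P = 0 := by rw [← Matrix.mul_sub, h0]
  rw [Matrix.mul_one] at h1
  exact (sub_eq_zero.mp h1).symm

lemma proj_mul_mfun {f : ℝ → ℝ} (hf : f 0 = 0) {A P : Matrix n n ℂ} (hA : A.IsHermitian)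
    (hPH : Pᴴ = P) (hP : P * P = P) (hs : P * A * P = A) : P * mfun f A = mfun f A := by
  have h := congrArg Matrix.conjTranspose (mfun_mul_proj hf hA hP hs)
  rwa [Matrix.conjTranspose_mul, hPH, (mfun_isHermitian f hA).eq] at h

open scoped MatrixOrder in
lemma msqrt_eq_sqrt {A : Matrix n n ℂ} (hA : A.PosSemidef) :
    mfun Real.sqrt A = CFC.sqrt A := by
  have hpsd : (mfun Real.sqrt A).PosSemidef :=
    mfun_posSemidef hA.1 (fun i => Real.sqrt_nonneg _)
  have hmul : mfun Real.sqrt A * mfun Real.sqrt A = A := by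
    rw [mfun_mul_mfun _ _ hA.1]
    conv_rhs => rw [← mfun_id hA.1]
    exact mfun_congr hA.1 fun i => Real.mul_self_sqrt (hA.eigenvalues_nonneg i)
  exact (CFC.sqrt_unique hmul hpsd.nonneg).symm

lemma msqrt_posSemidef {A : Matrix n n ℂ} (hA : A.PosSemidef) :
    (mfun Real.sqrt A).PosSemidef := by
  exact mfun_posSemidef hA.1 (fun i => Real.sqrt_nonneg _)

lemma msqrt_mul_self {A : Matrix n n ℂ} (hA : A.PosSemidef) :
    mfun Real.sqrt A * mfun Real.sqrt A = A := by
  open scoped MatrixOrder in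
  rw [msqrt_eq_sqrt hA]; exact CFC.sqrt_mul_sqrt_self A hA.nonneg

lemma eq_msqrt {B A : Matrix n n ℂ} (hB : B.PosSemidef) (hA : A.PosSemidef)
    (h : B * B = A) : B = mfun Real.sqrt A := by
  rw [msqrt_eq_sqrt hA]
  open scoped MatrixOrder in
  exact (CFC.sqrt_unique h hB.nonneg).symm

/-! ### inner product machinery -/

def ipd (v w : n → ℂ) : ℂ := dotProduct (star v) w

def vnorm (v : n → ℂ) : ℝ := Real.sqrt (ipd v v).re

lemma ipd_self_re_nonneg (v : n → ℂ) : 0 ≤ (ipd v v).re := by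
  rw [ipd, dotProduct, Complex.re_sum]
  apply Finset.sum_nonneg
  intro i _
  simp only [Pi.star_apply, Complex.star_def, Complex.mul_re, Complex.conj_re, Complex.conj_im]
  nlinarith [sq_nonneg (v i).re, sq_nonneg (v i).im]

lemma vnorm_nonneg (v : n → ℂ) : 0 ≤ vnorm v := Real.sqrt_nonneg _

lemma vnorm_sq (v : n → ℂ) : vnorm v ^ 2 = (ipd v v).re :=
  Real.sq_sqrt (ipd_self_re_nonneg v)

lemma ipd_eq_inner (v w : n → ℂ) :
    ipd v w = inner (𝕜 := ℂ) ((WithLp.equiv 2 (n → ℂ)).symm v)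
      ((WithLp.equiv 2 (n → ℂ)).symm w) := by
  simp [ipd, dotProduct, PiLp.inner_apply, RCLike.inner_apply, mul_comm,
    WithLp.equiv_symm_apply]

lemma vnorm_eq_norm (v : n → ℂ) :
    vnorm v = ‖(WithLp.equiv 2 (n → ℂ)).symm v‖ := by
  rw [norm_eq_sqrt_re_inner (𝕜 := ℂ), vnorm, ipd_eq_inner]
  simp [RCLike.re_to_complex]

lemma norm_ipd_le (v w : n → ℂ) : ‖ipd v w‖ ≤ vnorm v * vnorm w := by
  rw [ipd_eq_inner, vnorm_eq_norm, vnorm_eq_norm]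
  exact norm_inner_le_norm _ _

lemma re_ipd_le (v w : n → ℂ) : (ipd v w).re ≤ vnorm v * vnorm w :=
  (Complex.re_le_norm _).trans (by exact norm_ipd_le v w)

lemma ipd_mulVec_left (A : Matrix n n ℂ) (v w : n → ℂ) :
    ipd (A *ᵥ v) w = ipd v (Aᴴ *ᵥ w) := by
  rw [ipd, ipd, Matrix.star_mulVec, dotProduct_mulVec]

lemma vnorm_mulVec_sq (A : Matrix n n ℂ) (v : n → ℂ) :
    vnorm (A *ᵥ v) ^ 2 = (ipd v ((Aᴴ * A) *ᵥ v)).re := by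
  rw [vnorm_sq, ipd_mulVec_left, Matrix.mulVec_mulVec]

end QDAux

set_option linter.unusedSectionVars false
namespace QDAux
open Matrix QD

variable {n : Type*} [Fintype n] [DecidableEq n]

lemma posSemidef_sum {ι : Type*} (s : Finset ι) (A : ι → Matrix n n ℂ)
    (h : ∀ i ∈ s, (A i).PosSemidef) : (∑ i ∈ s, A i).PosSemidef :=
  Finset.sum_induction A _ (fun _ _ ha hb => ha.add hb) Matrix.PosSemidef.zero h

lemma trace_re_eq_sum_eigenvalues {S : Matrix n n ℂ} (hS : S.PosSemidef) :
    (S.trace).re = ∑ k, hS.1.eigenvalues k := by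
  conv_lhs => rw [← mfun_id hS.1]
  exact trace_mfun_re _ hS.1

lemma trace_diagonal_mul' (d : n → ℂ) (N : Matrix n n ℂ) :
    (Matrix.diagonal d * N).trace = ∑ k, d k * N k k := by
  simp [Matrix.trace, Matrix.diag, Matrix.diagonal_mul]

lemma trace_unitary_diag_conj_mul (U : Matrix n n ℂ) (d : n → ℂ) (X : Matrix n n ℂ) :
    (U * Matrix.diagonal d * star U * X).trace = ∑ k, d k * (star U * X * U) k k := by
  rw [Matrix.mul_assoc (U * Matrix.diagonal d) (star U) X, Matrix.trace_mul_cycle,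
    Matrix.trace_mul_comm, trace_diagonal_mul']

lemma re_trace_mul_le {S X : Matrix n n ℂ} (hS : S.PosSemidef) {c : ℝ} (hc : 0 ≤ c)
    (hX : ∀ v, vnorm (X *ᵥ v) ≤ c * vnorm v) :
    ((S * X).trace).re ≤ c * (S.trace).re := by
  have hUs : star (hS.1.eigenvectorUnitary : Matrix n n ℂ) *
      (hS.1.eigenvectorUnitary : Matrix n n ℂ) = 1 := Unitary.coe_star_mul_self _
  set U : Matrix n n ℂ := (hS.1.eigenvectorUnitary : Matrix n n ℂ) with hUdef
  set u : n → n → ℂ := fun k p => U p k with hu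
  have hcol : ∀ k, ipd (u k) (u k) = 1 := by
    intro k
    have h1 := congrFun (congrFun hUs k) k
    simp only [Matrix.mul_apply, Matrix.star_apply, Matrix.one_apply_eq] at h1
    simpa [ipd, dotProduct, hu] using h1
  have hvn : ∀ k, vnorm (u k) = 1 := by
    intro k
    rw [vnorm, hcol k]
    simp
  have hNkk : ∀ (Y : Matrix n n ℂ) (k : n),
      (star U * Y * U) k k = ipd (u k) (Y *ᵥ u k) := by
    intro Y k
    simp only [ipd, Matrix.mul_apply, Matrix.star_apply, Matrix.mulVec, dotProduct,
      Pi.star_apply, hu, Finset.sum_mul, Finset.mul_sum]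
    rw [Finset.sum_comm]
    exact Finset.sum_congr rfl fun q _ => Finset.sum_congr rfl fun p _ => by ring
  have ht : (S * X).trace = ∑ k, (hS.1.eigenvalues k : ℂ) * (star U * X * U) k k := by
    conv_lhs => rw [hS.1.spectral_theorem]
    rw [show (RCLike.ofReal ∘ hS.1.eigenvalues : n → ℂ) =
      (fun i => (hS.1.eigenvalues i : ℂ)) from rfl]
    exact trace_unitary_diag_conj_mul U _ X
  rw [ht, Complex.re_sum]
  have hterm : ∀ k, ((hS.1.eigenvalues k : ℂ) * (star U * X * U) k k).re ≤
      hS.1.eigenvalues k * c := by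
    intro k
    rw [Complex.re_ofReal_mul]
    apply mul_le_mul_of_nonneg_left _ (hS.eigenvalues_nonneg k)
    rw [hNkk]
    calc (ipd (u k) (X *ᵥ u k)).re ≤ vnorm (u k) * vnorm (X *ᵥ u k) := re_ipd_le _ _
      _ ≤ vnorm (u k) * (c * vnorm (u k)) :=
          mul_le_mul_of_nonneg_left (hX (u k)) (vnorm_nonneg _)
      _ = c := by rw [hvn]; ring
  calc ∑ k, ((hS.1.eigenvalues k : ℂ) * (star U * X * U) k k).re
      ≤ ∑ k, hS.1.eigenvalues k * c := Finset.sum_le_sum fun k _ => hterm k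
    _ = c * (S.trace).re := by rw [trace_re_eq_sum_eigenvalues hS, ← Finset.sum_mul]; ring

lemma opcon_conjTranspose {Y : Matrix n n ℂ} (h : ∀ v, vnorm (Y *ᵥ v) ≤ vnorm v) :
    ∀ v, vnorm (Yᴴ *ᵥ v) ≤ vnorm v := by
  intro v
  have h1 : vnorm (Yᴴ *ᵥ v) ^ 2 = (ipd v (Y *ᵥ (Yᴴ *ᵥ v))).re := by
    rw [vnorm_sq, ipd_mulVec_left, Matrix.conjTranspose_conjTranspose, Matrix.mulVec_mulVec,
      ← Matrix.mulVec_mulVec]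
  have h2 : (ipd v (Y *ᵥ (Yᴴ *ᵥ v))).re ≤ vnorm v * vnorm (Yᴴ *ᵥ v) :=
    (re_ipd_le _ _).trans (mul_le_mul_of_nonneg_left (h _) (vnorm_nonneg v))
  by_cases h0 : vnorm (Yᴴ *ᵥ v) = 0
  · rw [h0]; exact vnorm_nonneg v
  · have hpos : 0 < vnorm (Yᴴ *ᵥ v) := lt_of_le_of_ne (vnorm_nonneg _) (Ne.symm h0)
    nlinarith [h1, h2]

lemma msqrt_sum {ι : Type*} [Fintype ι] (A P : ι → Matrix n n ℂ)
    (hA : ∀ i, (A i).PosSemidef)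
    (hPH : ∀ i, (P i)ᴴ = P i) (hidem : ∀ i, P i * P i = P i)
    (horth : ∀ i j, i ≠ j → P i * P j = 0)
    (hsupp : ∀ i, P i * A i * P i = A i) :
    mfun Real.sqrt (∑ i, A i) = ∑ i, mfun Real.sqrt (A i) := by
  have hSpsd : (∑ i, A i).PosSemidef := posSemidef_sum _ _ fun i _ => hA i
  have hsum_psd : (∑ i, mfun Real.sqrt (A i)).PosSemidef :=
    posSemidef_sum _ _ fun i _ => msqrt_posSemidef (hA i)
  refine (eq_msqrt hsum_psd hSpsd ?_).symm
  rw [Finset.sum_mul_sum]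
  rw [Finset.sum_congr rfl (fun i (_ : i ∈ Finset.univ) =>
    Finset.sum_eq_single i
      (fun j _ hji => ?_) (fun habs => absurd (Finset.mem_univ i) habs))]
  · exact Finset.sum_congr rfl fun i _ => msqrt_mul_self (hA i)
  · have e1 : mfun Real.sqrt (A i) * P i = mfun Real.sqrt (A i) :=
      mfun_mul_proj Real.sqrt_zero (hA i).1 (hidem i) (hsupp i)
    have e2 : P j * mfun Real.sqrt (A j) = mfun Real.sqrt (A j) :=
      proj_mul_mfun Real.sqrt_zero (hA j).1 (hPH j) (hidem j) (hsupp j)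
    rw [← e1, ← e2, Matrix.mul_assoc, ← Matrix.mul_assoc (P i), horth i j (Ne.symm hji)]
    simp

end QDAux

set_option linter.unusedSectionVars false
set_option maxHeartbeats 1000000
namespace QDAux
open Matrix QD

variable {n : Type*} [Fintype n] [DecidableEq n]

lemma ipd_sum {ι : Type*} (s : Finset ι) (v : n → ℂ) (w : ι → n → ℂ) :
    ipd v (∑ i ∈ s, w i) = ∑ i ∈ s, ipd v (w i) := by
  simp only [ipd, dotProduct, Finset.sum_apply, Finset.mul_sum]
  rw [Finset.sum_comm]

lemma ipd_smul (v : n → ℂ) (c : ℂ) (w : n → ℂ) : ipd v (c • w) = c * ipd v w := by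
  simp only [ipd, dotProduct, Pi.smul_apply, smul_eq_mul, Finset.mul_sum]
  exact Finset.sum_congr rfl fun p _ => by ring

lemma sum_mulVec {ι : Type*} (s : Finset ι) (A : ι → Matrix n n ℂ) (v : n → ℂ) :
    (∑ i ∈ s, A i) *ᵥ v = ∑ i ∈ s, A i *ᵥ v := by
  classical
  induction s using Finset.induction with
  | empty => simp [Matrix.zero_mulVec]
  | insert _ _ h ih => simp [Finset.sum_insert h, Matrix.add_mulVec, ih]

lemma key {ι : Type*} [Fintype ι] {B : Matrix n n ℂ} (hB : B.PosSemidef)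
    (P : ι → Matrix n n ℂ) (hPH : ∀ i, (P i)ᴴ = P i) (hidem : ∀ i, P i * P i = P i)
    (horth : ∀ i j, i ≠ j → P i * P j = 0) :
    ∑ i, ((mfun Real.sqrt (P i * B * P i)).trace).re ≤
      Real.sqrt (Fintype.card ι) * ((mfun Real.sqrt B).trace).re := by
  set A : ι → Matrix n n ℂ := fun i => P i * B * P i with hAdef
  have hApsd : ∀ i, (A i).PosSemidef := by
    intro i
    have := hB.mul_mul_conjTranspose_same (P i)
    rwa [hPH i] at this
  have hAsupp : ∀ i, P i * A i * P i = A i := by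
    intro i
    have h : P i * (P i * B * P i) * P i = P i * P i * B * (P i * P i) := by noncomm_ring
    simp only [hAdef]
    rw [h, hidem i]
  set f : ι → ℝ := fun i => ((mfun Real.sqrt (A i)).trace).re with hfdef
  have hf0 : ∀ i, 0 ≤ f i := by
    intro i
    simp only [hfdef]
    rw [trace_mfun_re _ (hApsd i).1]
    exact Finset.sum_nonneg fun k _ => Real.sqrt_nonneg _
  set F : ℝ := ((mfun Real.sqrt B).trace).re with hFdef
  have hF0 : 0 ≤ F := by
    rw [hFdef, trace_mfun_re _ hB.1]
    exact Finset.sum_nonneg fun k _ => Real.sqrt_nonneg _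
  set gfun : ℝ → ℝ := fun x => if x = 0 then 0 else (Real.sqrt x)⁻¹ with hgdef
  have hg0 : gfun 0 = 0 := by simp [hgdef]
  set R : ι → Matrix n n ℂ := fun i => mfun gfun (A i) with hRdef
  have hRP : ∀ i, R i * P i = R i := fun i =>
    mfun_mul_proj hg0 (hApsd i).1 (hidem i) (hAsupp i)
  have hPR : ∀ i, P i * R i = R i := fun i =>
    proj_mul_mfun hg0 (hApsd i).1 (hPH i) (hidem i) (hAsupp i)
  have hRH : ∀ i, (R i)ᴴ = R i := fun i => (mfun_isHermitian gfun (hApsd i).1).eq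
  set M : Matrix n n ℂ := mfun Real.sqrt B with hMdef
  have hMH : Mᴴ = M := (msqrt_posSemidef hB).1.eq
  have hMM : M * M = B := msqrt_mul_self hB
  set Wd : ι → Matrix n n ℂ := fun i => R i * M with hWdef
  have hWdH : ∀ i, (Wd i)ᴴ = M * R i := by
    intro i
    simp only [hWdef]
    rw [Matrix.conjTranspose_mul, hRH, hMH]
  set Q : ι → Matrix n n ℂ := fun i => mfun (fun x => if x = 0 then 0 else 1) (A i) with hQdef
  have heig : ∀ i k, 0 ≤ (hApsd i).1.eigenvalues k := fun i k => (hApsd i).eigenvalues_nonneg k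
  have hRAR : ∀ i, R i * A i * R i = Q i := by
    intro i
    conv_lhs => rw [show A i = mfun (fun x => x) (A i) from (mfun_id (hApsd i).1).symm]
    simp only [hRdef, hQdef]
    rw [mfun_mul_mfun _ _ (hApsd i).1, mfun_mul_mfun _ _ (hApsd i).1]
    apply mfun_congr (hApsd i).1
    intro k
    rcases eq_or_ne ((hApsd i).1.eigenvalues k) 0 with h | h
    · simp [h, hgdef]
    · have hpos : 0 < (hApsd i).1.eigenvalues k := lt_of_le_of_ne (heig i k) (Ne.symm h)
      have hs : Real.sqrt ((hApsd i).1.eigenvalues k) ≠ 0 :=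
        ne_of_gt (Real.sqrt_pos.mpr hpos)
      simp only [hgdef, if_neg h]
      first
      | (field_simp; rw [Real.sq_sqrt (le_of_lt hpos)])
      | field_simp
  have hQeq : ∀ i, Wd i * (Wd i)ᴴ = Q i := by
    intro i
    rw [hWdH i]
    simp only [hWdef]
    have e1 : R i * M * (M * R i) = R i * (M * M) * R i := by noncomm_ring
    rw [e1, hMM]
    have e2 : R i * A i * R i = R i * B * R i := by
      have h : R i * A i * R i = R i * P i * B * (P i * R i) := by
        simp only [hAdef]; noncomm_ring
      rw [hRP i, hPR i] at h
      rw [h, Matrix.mul_assoc]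
    rw [← e2, hRAR i]
  have hQH : ∀ i, (Q i)ᴴ = Q i := fun i => (mfun_isHermitian _ (hApsd i).1).eq
  have hQQ : ∀ i, Q i * Q i = Q i := by
    intro i
    simp only [hQdef]
    rw [mfun_mul_mfun _ _ (hApsd i).1]
    apply mfun_congr (hApsd i).1
    intro k
    rcases eq_or_ne ((hApsd i).1.eigenvalues k) 0 with h | h <;> simp [h]
  have hQle : ∀ i (v : n → ℂ), (ipd v (Q i *ᵥ v)).re ≤ (ipd v v).re := by
    intro i v
    have hproj : (1 - Q i).PosSemidef := by
      have h1 : (1 - Q i)ᴴ * (1 - Q i) = 1 - Q i := by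
        rw [Matrix.conjTranspose_sub, Matrix.conjTranspose_one, hQH i]
        have h' : (1 - Q i) * (1 - Q i) = 1 - (Q i + Q i - Q i * Q i) := by noncomm_ring
        rw [h', hQQ i]
        congr 1
        abel
      have := Matrix.posSemidef_conjTranspose_mul_self (1 - Q i)
      rwa [h1] at this
    have h2 := hproj.dotProduct_mulVec_nonneg v
    have h3 : 0 ≤ (ipd v ((1 - Q i) *ᵥ v)).re := by
      rw [ipd]
      exact (Complex.le_def.mp h2).1
    rw [Matrix.sub_mulVec, Matrix.one_mulVec,
      show ipd v (v - Q i *ᵥ v) = ipd v v - ipd v (Q i *ᵥ v) from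
        dotProduct_sub _ _ _, Complex.sub_re] at h3
    linarith
  have hcon1 : ∀ i (v : n → ℂ), vnorm ((Wd i)ᴴ *ᵥ v) ≤ vnorm v := by
    intro i v
    have e : ipd ((Wd i)ᴴ *ᵥ v) ((Wd i)ᴴ *ᵥ v) = ipd v (Q i *ᵥ v) := by
      rw [ipd_mulVec_left, Matrix.conjTranspose_conjTranspose, Matrix.mulVec_mulVec, hQeq i]
    rw [vnorm, e]
    exact Real.sqrt_le_sqrt (hQle i v)
  have hcon2 : ∀ i (v : n → ℂ), vnorm (Wd i *ᵥ v) ≤ vnorm v := by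
    intro i v
    have h := opcon_conjTranspose (Y := (Wd i)ᴴ) (hcon1 i) v
    rwa [Matrix.conjTranspose_conjTranspose] at h
  have hWW : ∀ i j, i ≠ j → (Wd i)ᴴ * Wd j = 0 := by
    intro i j hij
    have h0 : R i * R j = 0 := by
      have h1 : R i * P i * (P j * R j) = R i * (P i * P j) * R j := by noncomm_ring
      rw [hRP i, hPR j] at h1
      rw [horth i j hij] at h1
      simpa using h1
    rw [hWdH i]
    simp only [hWdef]
    have e : M * R i * (R j * M) = M * (R i * R j) * M := by noncomm_ring
    rw [e, h0]
    simp
  have hmain : ∀ a : ι → ℝ, ∑ i, a i * f i ≤ Real.sqrt (∑ i, a i ^ 2) * F := by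
    intro a
    set D : Matrix n n ℂ := ∑ i, (a i : ℂ) • Wd i with hDdef
    have htr : ((M * D).trace).re = ∑ i, a i * f i := by
      rw [hDdef, Finset.mul_sum, Matrix.trace_sum, Complex.re_sum]
      apply Finset.sum_congr rfl
      intro i _
      rw [Matrix.mul_smul, Matrix.trace_smul,
        show ((a i : ℂ) • (M * Wd i).trace).re = a i * ((M * Wd i).trace).re from by
          rw [smul_eq_mul, Complex.re_ofReal_mul]]
      congr 1
      have e1 : M * Wd i = M * R i * M := by simp only [hWdef]; noncomm_ring
      have e2 : (M * R i * M).trace = (R i * B).trace := by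
        rw [Matrix.trace_mul_cycle, hMM, Matrix.trace_mul_comm]
      have e3 : (R i * B).trace = (R i * A i).trace := by
        have c1 : ((R i * B) * P i).trace = (R i * B).trace := by
          rw [Matrix.trace_mul_comm, ← Matrix.mul_assoc, hPR i]
        have c2 : (R i * B) * P i = R i * A i := by
          simp only [hAdef]
          conv_lhs => rw [← hRP i]
          noncomm_ring
        rw [← c2]
        exact c1.symm
      have e4 : R i * A i = mfun (fun x => gfun x * x) (A i) := by
        conv_lhs => rw [show A i = mfun (fun x => x) (A i) from (mfun_id (hApsd i).1).symm]
        simp only [hRdef]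
        rw [mfun_mul_mfun _ _ (hApsd i).1]
      have e5 : mfun (fun x => gfun x * x) (A i) = mfun Real.sqrt (A i) := by
        apply mfun_congr (hApsd i).1
        intro k
        rcases eq_or_ne ((hApsd i).1.eigenvalues k) 0 with h | h
        · simp [h, hgdef]
        · have hpos : 0 < (hApsd i).1.eigenvalues k := lt_of_le_of_ne (heig i k) (Ne.symm h)
          have hs : Real.sqrt ((hApsd i).1.eigenvalues k) ≠ 0 :=
            ne_of_gt (Real.sqrt_pos.mpr hpos)
          simp only [hgdef, if_neg h]
          first
          | (field_simp; rw [Real.sq_sqrt (le_of_lt hpos)])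
          | field_simp
      rw [e1, e2, e3, e4, e5]
    have hDH : Dᴴ = ∑ i, (a i : ℂ) • (Wd i)ᴴ := by
      rw [hDdef, Matrix.conjTranspose_sum]
      exact Finset.sum_congr rfl fun i _ => by
        rw [Matrix.conjTranspose_smul, Complex.star_def, Complex.conj_ofReal]
    have hDD : Dᴴ * D = ∑ i, (((a i) ^ 2 : ℝ) : ℂ) • ((Wd i)ᴴ * Wd i) := by
      rw [hDH, hDdef, Finset.sum_mul_sum]
      apply Finset.sum_congr rfl
      intro i _
      rw [Finset.sum_eq_single_of_mem i (Finset.mem_univ i) (fun j _ hji => by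
        rw [Matrix.smul_mul, Matrix.mul_smul, smul_smul, hWW i j (Ne.symm hji), smul_zero])]
      rw [Matrix.smul_mul, Matrix.mul_smul, smul_smul]
      congr 1
      push_cast
      ring
    have hDcon : ∀ v : n → ℂ, vnorm (D *ᵥ v) ≤ Real.sqrt (∑ i, a i ^ 2) * vnorm v := by
      intro v
      have h1 : vnorm (D *ᵥ v) ^ 2
          = ∑ i, a i ^ 2 * (ipd v (((Wd i)ᴴ * Wd i) *ᵥ v)).re := by
        rw [vnorm_mulVec_sq D v, hDD,
          sum_mulVec Finset.univ (fun i => (((a i) ^ 2 : ℝ) : ℂ) • ((Wd i)ᴴ * Wd i)) v]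
        simp only [Matrix.smul_mulVec, ipd_sum, ipd_smul, Complex.re_sum]
        exact Finset.sum_congr rfl fun i _ => Complex.re_ofReal_mul _ _
      have h4 : vnorm (D *ᵥ v) ^ 2 ≤ (∑ i, a i ^ 2) * vnorm v ^ 2 := by
        rw [h1, Finset.sum_mul]
        apply Finset.sum_le_sum
        intro i _
        apply mul_le_mul_of_nonneg_left _ (sq_nonneg (a i))
        rw [← vnorm_mulVec_sq]
        exact pow_le_pow_left₀ (vnorm_nonneg _) (hcon2 i v) 2
      calc vnorm (D *ᵥ v) = Real.sqrt (vnorm (D *ᵥ v) ^ 2) :=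
            (Real.sqrt_sq (vnorm_nonneg _)).symm
        _ ≤ Real.sqrt ((∑ i, a i ^ 2) * vnorm v ^ 2) := Real.sqrt_le_sqrt h4
        _ = Real.sqrt (∑ i, a i ^ 2) * vnorm v := by
            rw [Real.sqrt_mul (Finset.sum_nonneg fun i _ => sq_nonneg _),
              Real.sqrt_sq (vnorm_nonneg _)]
    calc ∑ i, a i * f i = ((M * D).trace).re := htr.symm
      _ ≤ Real.sqrt (∑ i, a i ^ 2) * (M.trace).re :=
          re_trace_mul_le (msqrt_posSemidef hB) (Real.sqrt_nonneg _) hDcon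
      _ = Real.sqrt (∑ i, a i ^ 2) * F := by rw [hFdef]
  -- conclude
  have h1 := hmain f
  have h1' : ∑ i, f i ^ 2 ≤ Real.sqrt (∑ i, f i ^ 2) * F := by
    calc ∑ i, f i ^ 2 = ∑ i, f i * f i := by
          exact Finset.sum_congr rfl fun i _ => sq (f i) ▸ by ring
      _ ≤ _ := h1
  have hs0 : 0 ≤ Real.sqrt (∑ i, f i ^ 2) := Real.sqrt_nonneg _
  have hs2 : Real.sqrt (∑ i, f i ^ 2) ^ 2 = ∑ i, f i ^ 2 :=
    Real.sq_sqrt (Finset.sum_nonneg fun i _ => sq_nonneg _)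
  have hsF : Real.sqrt (∑ i, f i ^ 2) ≤ F := by
    rcases eq_or_lt_of_le hs0 with h | h
    · rw [← h]; exact hF0
    · nlinarith [h1', hs2]
  have h2 : (∑ i, f i) ^ 2 ≤ (Fintype.card ι : ℝ) * Real.sqrt (∑ i, f i ^ 2) ^ 2 := by
    rw [hs2]
    have := sq_sum_le_card_mul_sum_sq (s := (Finset.univ : Finset ι)) (f := f)
    simpa [Finset.card_univ] using this
  calc ∑ i, f i = Real.sqrt ((∑ i, f i) ^ 2) :=
        (Real.sqrt_sq (Finset.sum_nonneg fun i _ => hf0 i)).symm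
    _ ≤ Real.sqrt ((Fintype.card ι : ℝ) * Real.sqrt (∑ i, f i ^ 2) ^ 2) :=
        Real.sqrt_le_sqrt h2
    _ = Real.sqrt (Fintype.card ι) * Real.sqrt (∑ i, f i ^ 2) := by
        rw [Real.sqrt_mul (Nat.cast_nonneg _), Real.sqrt_sq hs0]
    _ ≤ Real.sqrt (Fintype.card ι) * F :=
        mul_le_mul_of_nonneg_left hsF (Real.sqrt_nonneg _)

end QDAux


set_option maxHeartbeats 1000000 in
open QD Matrix in
/-- If `H = ⊕ᵢ Hᵢ` with projections `Pᵢ` and `σ = Σᵢ σᵢ` with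
`supp σᵢ ⊆ Hᵢ`, then `F(Σᵢ Pᵢ ρ Pᵢ, σ) ≤ √|I| · F(ρ, σ)`. -/
theorem fid_pinched_le_sqrt_card_mul_fid
    {n : Type*} [Fintype n] [DecidableEq n] {ι : Type*} [Fintype ι]
    (P : ι → Matrix n n ℂ) (ρ σ : Matrix n n ℂ) (σs : ι → Matrix n n ℂ)
    (hρ : IsState ρ) (hσ : IsState σ)
    (hherm : ∀ i, (P i)ᴴ = P i) (hidem : ∀ i, P i * P i = P i)
    (horth : ∀ i j, i ≠ j → P i * P j = 0) (hsum : ∑ i, P i = 1)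
    (hdecomp : σ = ∑ i, σs i) (hsupp : ∀ i, P i * σs i * P i = σs i) :
    fid (∑ i, P i * ρ * P i) σ ≤ Real.sqrt (Fintype.card ι) * fid ρ σ := by
  classical
  obtain ⟨hρp, -⟩ := hρ
  obtain ⟨hσp, -⟩ := hσ
  have hσs_eq : ∀ i, σs i = P i * σ * P i := by
    intro i
    have h : ∑ j, P i * σs j * P i = σs i := by
      rw [Finset.sum_eq_single_of_mem i (Finset.mem_univ i) (fun j _ hji => by
        conv_lhs => rw [← hsupp j]
        have e : P i * (P j * σs j * P j) * P i = P i * P j * σs j * (P j * P i) := by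
          noncomm_ring
        rw [e, horth i j (Ne.symm hji), horth j i hji]
        simp)]
      exact hsupp i
    calc σs i = ∑ j, P i * σs j * P i := h.symm
      _ = P i * (∑ j, σs j) * P i := by rw [Finset.mul_sum, Finset.sum_mul]
      _ = P i * σ * P i := by rw [← hdecomp]
  have hσspsd : ∀ i, (σs i).PosSemidef := by
    intro i
    rw [hσs_eq i]
    have := hσp.mul_mul_conjTranspose_same (P i)
    rwa [hherm i] at this
  have hsqσ : mfun Real.sqrt σ = ∑ i, mfun Real.sqrt (σs i) := by
    rw [hdecomp]
    exact QDAux.msqrt_sum σs P hσspsd hherm hidem horth hsupp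
  have hsP : ∀ i, mfun Real.sqrt (σs i) * P i = mfun Real.sqrt (σs i) := fun i =>
    QDAux.mfun_mul_proj Real.sqrt_zero (hσspsd i).1 (hidem i) (hsupp i)
  have hPs : ∀ i, P i * mfun Real.sqrt (σs i) = mfun Real.sqrt (σs i) := fun i =>
    QDAux.proj_mul_mfun Real.sqrt_zero (hσspsd i).1 (hherm i) (hidem i) (hsupp i)
  have hPms : ∀ k, P k * mfun Real.sqrt σ = mfun Real.sqrt (σs k) := by
    intro k
    rw [hsqσ, Finset.mul_sum]
    rw [Finset.sum_eq_single_of_mem k (Finset.mem_univ k) (fun j _ hjk => by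
      rw [← hPs j, ← Matrix.mul_assoc, horth k j (Ne.symm hjk), Matrix.zero_mul])]
    exact hPs k
  have hmsP : ∀ k, mfun Real.sqrt σ * P k = mfun Real.sqrt (σs k) := by
    intro k
    rw [hsqσ, Finset.sum_mul]
    rw [Finset.sum_eq_single_of_mem k (Finset.mem_univ k) (fun j _ hjk => by
      rw [← hsP j, Matrix.mul_assoc, horth j k hjk, Matrix.mul_zero])]
    exact hsP k
  set M : Matrix n n ℂ := mfun Real.sqrt ρ * mfun Real.sqrt σ with hM
  set B : Matrix n n ℂ := Mᴴ * M with hB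
  have hBpsd : B.PosSemidef := Matrix.posSemidef_conjTranspose_mul_self M
  have hBval : B = mfun Real.sqrt σ * ρ * mfun Real.sqrt σ := by
    rw [hB, hM, Matrix.conjTranspose_mul, (QDAux.msqrt_posSemidef hσp).1.eq,
      (QDAux.msqrt_posSemidef hρp).1.eq]
    rw [show mfun Real.sqrt σ * mfun Real.sqrt ρ * (mfun Real.sqrt ρ * mfun Real.sqrt σ)
      = mfun Real.sqrt σ * (mfun Real.sqrt ρ * mfun Real.sqrt ρ) * mfun Real.sqrt σ from by
        noncomm_ring, QDAux.msqrt_mul_self hρp]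
  have hρ'psd : (∑ i, P i * ρ * P i).PosSemidef := by
    apply QDAux.posSemidef_sum
    intro i _
    have := hρp.mul_mul_conjTranspose_same (P i)
    rwa [hherm i] at this
  have hPBP : ∀ k, P k * B * P k = mfun Real.sqrt (σs k) * ρ * mfun Real.sqrt (σs k) := by
    intro k
    rw [hBval]
    rw [show P k * (mfun Real.sqrt σ * ρ * mfun Real.sqrt σ) * P k
      = P k * mfun Real.sqrt σ * ρ * (mfun Real.sqrt σ * P k) from by noncomm_ring,
      hPms k, hmsP k]
  have hTpsd : ∀ k, (P k * B * P k).PosSemidef := by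
    intro k
    have := hBpsd.mul_mul_conjTranspose_same (P k)
    rwa [hherm k] at this
  have hTsupp : ∀ k, P k * (P k * B * P k) * P k = P k * B * P k := by
    intro k
    rw [show P k * (P k * B * P k) * P k = P k * P k * B * (P k * P k) from by noncomm_ring,
      hidem k]
  have hfid1 : fid (∑ i, P i * ρ * P i) σ
      = ∑ k, ((mfun Real.sqrt (P k * B * P k)).trace).re := by
    simp only [fid, traceNorm]
    have hinner : (mfun Real.sqrt (∑ i, P i * ρ * P i) * mfun Real.sqrt σ)ᴴ *
        (mfun Real.sqrt (∑ i, P i * ρ * P i) * mfun Real.sqrt σ) = ∑ k, P k * B * P k := by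
      rw [Matrix.conjTranspose_mul, (QDAux.msqrt_posSemidef hσp).1.eq,
        (QDAux.msqrt_posSemidef hρ'psd).1.eq]
      rw [show mfun Real.sqrt σ * mfun Real.sqrt (∑ i, P i * ρ * P i) *
          (mfun Real.sqrt (∑ i, P i * ρ * P i) * mfun Real.sqrt σ)
        = mfun Real.sqrt σ * (mfun Real.sqrt (∑ i, P i * ρ * P i) *
          mfun Real.sqrt (∑ i, P i * ρ * P i)) * mfun Real.sqrt σ from by noncomm_ring,
        QDAux.msqrt_mul_self hρ'psd]
      rw [Finset.mul_sum, Finset.sum_mul]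
      apply Finset.sum_congr rfl
      intro k _
      rw [hPBP k]
      rw [show mfun Real.sqrt σ * (P k * ρ * P k) * mfun Real.sqrt σ
        = mfun Real.sqrt σ * P k * ρ * (P k * mfun Real.sqrt σ) from by noncomm_ring,
        hmsP k, hPms k]
    rw [hinner, QDAux.msqrt_sum (fun k => P k * B * P k) P hTpsd hherm hidem horth hTsupp,
      Matrix.trace_sum, Complex.re_sum]
  have hfid2 : fid ρ σ = ((mfun Real.sqrt B).trace).re := by
    simp only [fid, traceNorm]; rfl
  rw [hfid1, hfid2]
  exact QDAux.key hBpsd P hherm hidem horth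
end
end

section
/- Pinching inequality: for a self-adjoint operator A with v(A) distinct eigenvalues and spectral projections P_1,…,P_r, every positive semidefinite operator σ satisfies σ ≤ v(A) · Σ_i P_i σ P_i in the Loewner order. -/
open scoped Matrix ComplexOrder

noncomputable section
open Classical

section PinchHelpers
open Matrix

private lemma dot_conj {n : Type*} [Fintype n] (C : Matrix n n ℂ) (v : n → ℂ) :
    star v ⬝ᵥ ((Cᴴ * C) *ᵥ v) = star (C *ᵥ v) ⬝ᵥ (C *ᵥ v) := by
  rw [← mulVec_mulVec, dotProduct_mulVec, vecMul_conjTranspose, star_star, star_mulVec]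

private lemma cs_ineq (r : ℕ) (a : Fin r → ℂ) :
    Complex.normSq (∑ i, a i) ≤ r * ∑ i, Complex.normSq (a i) := by
  calc Complex.normSq (∑ i, a i) = ‖∑ i, a i‖ ^ 2 := by
        rw [Complex.normSq_eq_norm_sq]
    _ ≤ (∑ i, ‖a i‖) ^ 2 := by
        apply pow_le_pow_left₀ (norm_nonneg _) (norm_sum_le _ _)
    _ ≤ r * ∑ i, ‖a i‖ ^ 2 := by
        simpa using sq_sum_le_card_mul_sum_sq (s := Finset.univ) (f := fun i => ‖a i‖)
    _ = r * ∑ i, Complex.normSq (a i) := by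
        congr 1; apply Finset.sum_congr rfl; intro i _
        rw [Complex.normSq_eq_norm_sq]

private lemma dot_self_eq {n : Type*} [Fintype n] (v : n → ℂ) :
    star v ⬝ᵥ v = ((∑ y, Complex.normSq (v y) : ℝ) : ℂ) := by
  simp [dotProduct, Complex.normSq_eq_conj_mul_self]

private lemma sum_mulVec {n α : Type*} [Fintype n] [Fintype α]
    (M : α → Matrix n n ℂ) (x : n → ℂ) :
    (∑ i, M i) *ᵥ x = ∑ i, (M i) *ᵥ x := by
  funext y
  simp [mulVec, dotProduct, Matrix.sum_apply, Finset.sum_mul, Finset.sum_apply]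
  exact Finset.sum_comm

private lemma dot_sum {n α : Type*} [Fintype n] [Fintype α] (u : n → ℂ) (v : α → n → ℂ) :
    u ⬝ᵥ (∑ i, v i) = ∑ i, u ⬝ᵥ v i := by
  simp [dotProduct, Finset.sum_apply, Finset.mul_sum]
  exact Finset.sum_comm

end PinchHelpers

open QD Matrix in
/-- pinching inequality `σ ≤ v(A) · Σᵢ Pᵢ σ Pᵢ` for the spectral
projections `P₁,…,P_r` of a self-adjoint `A` with `r` distinct eigenvalues. -/
theorem pinching_inequality
    {n : Type*} [Fintype n] [DecidableEq n] (r : ℕ) (A σ : Matrix n n ℂ)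
    (P : Fin r → Matrix n n ℂ) (μ : Fin r → ℝ)
    (hherm : ∀ i, (P i)ᴴ = P i) (hidem : ∀ i, P i * P i = P i)
    (hne : ∀ i, P i ≠ 0) (horth : ∀ i j, i ≠ j → P i * P j = 0)
    (hsum : ∑ i, P i = 1) (hμ : Function.Injective μ)
    (hA : A = ∑ i, (μ i : ℂ) • P i) (hσ : σ.PosSemidef) :
    ((r : ℂ) • (∑ i, P i * σ * P i) - σ).PosSemidef := by
  obtain ⟨B, hB⟩ : ∃ B : Matrix n n ℂ, σ = Bᴴ * B := by
    open MatrixOrder in exact CStarAlgebra.nonneg_iff_eq_star_mul_self.mp hσ.nonneg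
  rw [posSemidef_iff_dotProduct_mulVec]
  constructor
  · have h1 : (∑ i, P i * σ * P i).IsHermitian := by
      unfold IsHermitian
      rw [conjTranspose_sum]
      apply Finset.sum_congr rfl
      intro i _
      simp [conjTranspose_mul, hherm, hσ.1.eq, mul_assoc]
    unfold IsHermitian
    rw [conjTranspose_sub, conjTranspose_smul, hσ.1.eq, h1.eq]
    simp
  · intro x
    set w : Fin r → n → ℂ := fun i => B *ᵥ ((P i) *ᵥ x) with hw
    have hsumw : ∑ i, w i = B *ᵥ x := by
      have hx : ∑ i, (P i) *ᵥ x = x := by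
        rw [← _root_.sum_mulVec, hsum, one_mulVec]
      calc ∑ i, w i = ∑ i, B.mulVecLin ((P i) *ᵥ x) := rfl
        _ = B.mulVecLin (∑ i, (P i) *ᵥ x) := (map_sum _ _ _).symm
        _ = B *ᵥ x := by rw [hx]; rfl
    have hterm : ∀ i, star x ⬝ᵥ ((P i * σ * P i) *ᵥ x) = star (w i) ⬝ᵥ (w i) := by
      intro i
      have h2 : P i * σ * P i = (B * P i)ᴴ * (B * P i) := by
        rw [conjTranspose_mul, hherm, hB]
        noncomm_ring
      rw [h2, dot_conj, hw]
      simp [mulVec_mulVec]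
    have hσx : star x ⬝ᵥ (σ *ᵥ x) = star (B *ᵥ x) ⬝ᵥ (B *ᵥ x) := by
      rw [hB, dot_conj]
    rw [sub_mulVec, smul_mulVec, dotProduct_sub, dotProduct_smul, hσx, ← hsumw,
      dot_self_eq]
    have h3 : star x ⬝ᵥ ((∑ i, P i * σ * P i) *ᵥ x) =
        ((∑ i, ∑ y, Complex.normSq (w i y) : ℝ) : ℂ) := by
      rw [_root_.sum_mulVec, dot_sum]
      simp only [hterm, dot_self_eq]
      norm_cast
    rw [h3]
    have key : (∑ y, Complex.normSq ((∑ i, w i) y) : ℝ) ≤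
        r * ∑ i, ∑ y, Complex.normSq (w i y) := by
      calc (∑ y, Complex.normSq ((∑ i, w i) y))
          ≤ ∑ y : n, (r * ∑ i, Complex.normSq (w i y)) := by
            apply Finset.sum_le_sum; intro y _
            simpa [Finset.sum_apply] using cs_ineq r (fun i => w i y)
        _ = r * ∑ i, ∑ y, Complex.normSq (w i y) := by
            rw [← Finset.mul_sum, Finset.sum_comm]
    have hcast : ((r : ℂ)) • ((∑ i, ∑ y, Complex.normSq (w i y) : ℝ) : ℂ)
        - ((∑ y, Complex.normSq ((∑ i, w i) y) : ℝ) : ℂ)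
        = (((r * ∑ i, ∑ y, Complex.normSq (w i y)
            - ∑ y, Complex.normSq ((∑ i, w i) y) : ℝ)) : ℂ) := by
      simp only [smul_eq_mul]
      push_cast
      ring
    rw [hcast, Complex.zero_le_real]
    linarith
end
end

section
/- For a pure quantum state ρ₂ = |ψ⟩⟨ψ| and any quantum state σ₂ with ⟨ψ|σ₂|ψ⟩ > 0, the sandwiched Rényi divergence of order α equals the Petz Rényi divergence of order 2 − 1/α: D*_α(ρ₂‖σ₂) = D_{2−1/α}(ρ₂‖σ₂) for all α ∈ (1/2, 1). -/
open scoped Matrix ComplexOrder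

noncomputable section
open Classical

namespace Aux10
open QD Matrix

variable {n : Type*} [Fintype n] [DecidableEq n]

lemma mfun_of_hermitian {A : Matrix n n ℂ} (hA : A.IsHermitian) (f : ℝ → ℝ) :
    mfun f A = (hA.eigenvectorUnitary : Matrix n n ℂ) *
      Matrix.diagonal (fun i => (f (hA.eigenvalues i) : ℂ)) *
      (star (hA.eigenvectorUnitary : Matrix n n ℂ)) := by
  rw [mfun, dif_pos hA]

lemma trace_mfun {A : Matrix n n ℂ} (hA : A.IsHermitian) (f : ℝ → ℝ) :
    (mfun f A).trace = ∑ i, (f (hA.eigenvalues i) : ℂ) := by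
  rw [mfun_of_hermitian hA, Matrix.trace_mul_cycle,
    Unitary.coe_star_mul_self, one_mul, Matrix.trace_diagonal]

lemma sandwich_mul {U : Matrix n n ℂ} (hU : star U * U = 1) (D E : Matrix n n ℂ) :
    (U * D * star U) * (U * E * star U) = U * (D * E) * star U := by
  simp only [Matrix.mul_assoc]
  rw [show star U * (U * (E * star U)) = E * star U from by
    rw [← Matrix.mul_assoc, hU, Matrix.one_mul]]

lemma mfun_mul_mfun {A : Matrix n n ℂ} (hA : A.IsHermitian) (f g : ℝ → ℝ) :
    mfun f A * mfun g A = mfun (fun x => f x * g x) A := by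
  rw [mfun_of_hermitian hA f, mfun_of_hermitian hA g, mfun_of_hermitian hA,
    sandwich_mul (Unitary.coe_star_mul_self _), Matrix.diagonal_mul_diagonal]
  congr 2
  funext i
  push_cast
  ring

lemma mfun_eq_self {A : Matrix n n ℂ} (hA : A.IsHermitian) (f : ℝ → ℝ)
    (h : ∀ i, f (hA.eigenvalues i) = hA.eigenvalues i) :
    mfun f A = A := by
  rw [mfun_of_hermitian hA f]
  conv_rhs => rw [hA.spectral_theorem]
  have : (fun i => (f (hA.eigenvalues i) : ℂ)) = Complex.ofReal ∘ hA.eigenvalues := by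
    funext i; simp [Function.comp, h i]
  rw [this]
  rfl

/-- quadratic form of a conjugated diagonal -/
lemma quad_conj (U : Matrix n n ℂ) (d : n → ℂ) (ψ : n → ℂ) :
    star ψ ⬝ᵥ (U * Matrix.diagonal d * star U) *ᵥ ψ
      = ∑ i, d i * (‖(star U *ᵥ ψ) i‖ ^ 2 : ℝ) := by
  set w := star U *ᵥ ψ with hw
  have h1 : star ψ ᵥ* U = star w := by
    rw [hw, Matrix.star_mulVec, Matrix.star_eq_conjTranspose,
      Matrix.conjTranspose_conjTranspose]
  rw [← Matrix.mulVec_mulVec, ← Matrix.mulVec_mulVec, Matrix.dotProduct_mulVec (star ψ) U, h1]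
  simp only [dotProduct, Pi.star_apply, Matrix.mulVec_diagonal]
  refine Finset.sum_congr rfl fun i _ => ?_
  rw [RCLike.star_def]
  rw [show (starRingEnd ℂ) (w i) * (d i * w i) = d i * ((w i) * (starRingEnd ℂ) (w i)) by ring,
    Complex.mul_conj']
  push_cast
  ring


lemma quad_mfun {A : Matrix n n ℂ} (hA : A.IsHermitian) (f : ℝ → ℝ) (ψ : n → ℂ) :
    star ψ ⬝ᵥ (mfun f A) *ᵥ ψ
      = ∑ i, (f (hA.eigenvalues i) : ℂ) *
          ((‖(star (hA.eigenvectorUnitary : Matrix n n ℂ) *ᵥ ψ) i‖ ^ 2 : ℝ) : ℂ) := by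
  rw [mfun_of_hermitian hA]
  exact quad_conj _ _ ψ

lemma quad_self {A : Matrix n n ℂ} (hA : A.IsHermitian) (ψ : n → ℂ) :
    star ψ ⬝ᵥ A *ᵥ ψ
      = ∑ i, ((hA.eigenvalues i : ℝ) : ℂ) *
          ((‖(star (hA.eigenvectorUnitary : Matrix n n ℂ) *ᵥ ψ) i‖ ^ 2 : ℝ) : ℂ) := by
  conv_lhs => rw [hA.spectral_theorem]
  simpa [Function.comp] using
    quad_conj (hA.eigenvectorUnitary : Matrix n n ℂ) (Complex.ofReal ∘ hA.eigenvalues) ψ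

lemma mfun_isHermitian {A : Matrix n n ℂ} (hA : A.IsHermitian) (f : ℝ → ℝ) :
    (mfun f A).IsHermitian := by
  rw [mfun_of_hermitian hA]
  show _ᴴ = _
  rw [Matrix.conjTranspose_mul, Matrix.conjTranspose_mul, Matrix.diagonal_conjTranspose]
  rw [← Matrix.star_eq_conjTranspose (hA.eigenvectorUnitary : Matrix n n ℂ),
    ← Matrix.star_eq_conjTranspose (star (hA.eigenvectorUnitary : Matrix n n ℂ)), star_star]
  have : star (fun i => (f (hA.eigenvalues i) : ℂ)) = fun i => (f (hA.eigenvalues i) : ℂ) := by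
    funext i; simp
  rw [this, Matrix.mul_assoc]

lemma mfun_congr {A : Matrix n n ℂ} (hA : A.IsHermitian) {f g : ℝ → ℝ}
    (h : ∀ i, f (hA.eigenvalues i) = g (hA.eigenvalues i)) :
    mfun f A = mfun g A := by
  rw [mfun_of_hermitian hA (f := f), mfun_of_hermitian hA (f := g)]
  have he : (fun i => (f (hA.eigenvalues i) : ℂ)) = fun i => (g (hA.eigenvalues i) : ℂ) := by
    funext i; rw [h i]
  rw [he]

lemma trace_eq_sum_eigenvalues {A : Matrix n n ℂ} (hA : A.IsHermitian) :
    A.trace = ∑ i, ((hA.eigenvalues i : ℝ) : ℂ) := by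
  conv_lhs => rw [hA.spectral_theorem]
  rw [Unitary.conjStarAlgAut_apply, Matrix.trace_mul_cycle, Unitary.coe_star_mul_self, one_mul, Matrix.trace_diagonal]
  simp [Function.comp]

lemma eigenvalues_quad {A : Matrix n n ℂ} (hA : A.IsHermitian) (t : ℝ)
    (h : A * A = (t : ℂ) • A) (i : n) :
    hA.eigenvalues i ^ 2 = t * hA.eigenvalues i := by
  set U := (hA.eigenvectorUnitary : Matrix n n ℂ) with hUdef
  have hD : star U * A * U = Matrix.diagonal (Complex.ofReal ∘ hA.eigenvalues) :=
    by have h := hA.conjStarAlgAut_star_eigenvectorUnitary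
       rwa [Unitary.conjStarAlgAut_apply, Unitary.coe_star, star_star] at h
  have hUU : U * star U = 1 := Unitary.coe_mul_star_self _
  have key : Matrix.diagonal (Complex.ofReal ∘ hA.eigenvalues) *
      Matrix.diagonal (Complex.ofReal ∘ hA.eigenvalues)
      = (t : ℂ) • Matrix.diagonal (Complex.ofReal ∘ hA.eigenvalues) := by
    rw [← hD]
    calc (star U * A * U) * (star U * A * U)
        = star U * (A * (U * star U) * A) * U := by
          simp only [Matrix.mul_assoc]
      _ = star U * (A * A) * U := by rw [hUU, Matrix.mul_one]
      _ = (t : ℂ) • (star U * A * U) := by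
          rw [h, Matrix.mul_smul, Matrix.smul_mul]
  have h2 := congrArg (fun M : Matrix n n ℂ => M i i) key
  simp only [Matrix.diagonal_mul_diagonal, Matrix.diagonal_apply_eq, Matrix.smul_apply,
    Function.comp_apply, smul_eq_mul] at h2
  have h3 : ((hA.eigenvalues i ^ 2 : ℝ) : ℂ) = ((t * hA.eigenvalues i : ℝ) : ℂ) := by
    push_cast
    rw [sq]
    exact h2
  exact_mod_cast h3

lemma sum_f_of_quad {t : ℝ} (ht : 0 < t) (μ : n → ℝ) (hq : ∀ i, μ i ^ 2 = t * μ i)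
    (hs : ∑ i, μ i = t) (f : ℝ → ℝ) (hf0 : f 0 = 0) :
    ∑ i, f (μ i) = f t := by
  have hmem : ∀ i, μ i = 0 ∨ μ i = t := by
    intro i
    rcases eq_or_ne (μ i) 0 with h | h
    · exact Or.inl h
    · right
      have h1 := hq i
      have : μ i * μ i = t * μ i := by nlinarith [hq i]
      exact mul_right_cancel₀ h this
  set S := Finset.univ.filter (fun i => μ i = t) with hS
  have hsum : ∑ i, μ i = S.card * t := by
    rw [← Finset.sum_filter_add_sum_filter_not Finset.univ (fun i => μ i = t)]
    have h1 : ∑ i ∈ S, μ i = S.card * t := by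
      rw [Finset.sum_congr rfl (fun i hi => (Finset.mem_filter.mp hi).2),
        Finset.sum_const, nsmul_eq_mul]
    have h2 : ∑ i ∈ Finset.univ.filter (fun i => ¬ μ i = t), μ i = 0 := by
      apply Finset.sum_eq_zero
      intro i hi
      rcases hmem i with h | h
      · exact h
      · exact absurd h (Finset.mem_filter.mp hi).2
    rw [h1, h2, add_zero]
  have hcard : (S.card : ℝ) = 1 := by
    have h1 : (S.card : ℝ) * t = 1 * t := by rw [one_mul, ← hsum, hs]
    exact mul_right_cancel₀ (ne_of_gt ht) h1
  calc ∑ i, f (μ i)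
      = ∑ i ∈ S, f (μ i) + ∑ i ∈ Finset.univ.filter (fun i => ¬ μ i = t), f (μ i) :=
        (Finset.sum_filter_add_sum_filter_not Finset.univ (fun i => μ i = t) _).symm
    _ = (S.card : ℝ) * f t := by
        have h1 : ∑ i ∈ S, f (μ i) = S.card * f t := by
          rw [Finset.sum_congr rfl (fun i hi => by rw [(Finset.mem_filter.mp hi).2]),
            Finset.sum_const, nsmul_eq_mul]
        have h2 : ∑ i ∈ Finset.univ.filter (fun i => ¬ μ i = t), f (μ i) = 0 := by
          apply Finset.sum_eq_zero
          intro i hi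
          rcases hmem i with h | h
          · rw [h, hf0]
          · exact absurd h (Finset.mem_filter.mp hi).2
        rw [h1, h2, add_zero]
    _ = f t := by rw [hcard, one_mul]

lemma vecMulVec_isHermitian (φ : n → ℂ) : (Matrix.vecMulVec φ (star φ)).IsHermitian := by
  ext i j
  simp [Matrix.conjTranspose_apply, Matrix.vecMulVec_apply, mul_comm]

lemma vecMulVec_mul_vecMulVec (a b c d : n → ℂ) :
    Matrix.vecMulVec a b * Matrix.vecMulVec c d = (b ⬝ᵥ c) • Matrix.vecMulVec a d := by
  ext i j
  simp only [Matrix.mul_apply, Matrix.vecMulVec_apply, Matrix.smul_apply, dotProduct,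
    smul_eq_mul, Finset.sum_mul]
  refine Finset.sum_congr rfl fun k _ => by ring

lemma trace_vecMulVec_mul (u v : n → ℂ) (B : Matrix n n ℂ) :
    (Matrix.vecMulVec u (star v) * B).trace = star v ⬝ᵥ B *ᵥ u := by
  simp only [Matrix.trace, Matrix.diag, Matrix.mul_apply, Matrix.vecMulVec_apply,
    dotProduct, Matrix.mulVec, Pi.star_apply]
  rw [Finset.sum_comm]
  refine Finset.sum_congr rfl fun j _ => ?_
  rw [Finset.mul_sum]
  refine Finset.sum_congr rfl fun i _ => by ring

lemma trace_vecMulVec (u v : n → ℂ) : (Matrix.vecMulVec u v).trace = u ⬝ᵥ v := by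
  simp [Matrix.trace, Matrix.diag, Matrix.vecMulVec_apply, dotProduct]

lemma conj_vecMulVec {A : Matrix n n ℂ} (hA : A.IsHermitian) (u : n → ℂ) :
    A * Matrix.vecMulVec u (star u) * A
      = Matrix.vecMulVec (A *ᵥ u) (star (A *ᵥ u)) := by
  ext i j
  simp only [Matrix.mul_apply, Matrix.vecMulVec_apply, Matrix.mulVec, dotProduct,
    Pi.star_apply, star_sum, star_mul', Finset.sum_mul, Finset.mul_sum]
  have hsym : ∀ p q : n, star (A p q) = A q p := fun p q => by
    rw [← Matrix.conjTranspose_apply, hA.eq]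
  refine Finset.sum_congr rfl fun l _ => Finset.sum_congr rfl fun k _ => ?_
  rw [hsym j l]
  ring


lemma sum_ofReal_mul (a b : n → ℝ) :
    (∑ i, ((a i : ℝ) : ℂ) * ((b i : ℝ) : ℂ)) = ((∑ i, a i * b i : ℝ) : ℂ) := by
  push_cast
  rfl

lemma qstar_val {σ : Matrix n n ℂ} (hσH : σ.IsHermitian) (ψ : n → ℂ) (s α q : ℝ)
    (hq_pos : 0 < q)
    (hφq : star (mpow σ s *ᵥ ψ) ⬝ᵥ (mpow σ s *ᵥ ψ) = (q : ℂ)) :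
    ((mfun (fun x => if x = 0 then 0 else x ^ α)
        (mpow σ s * Matrix.vecMulVec ψ (star ψ) * mpow σ s)).trace).re = q ^ α := by
  have hAH : (mpow σ s).IsHermitian := mfun_isHermitian hσH _
  rw [conj_vecMulVec hAH ψ]
  have hMH := vecMulVec_isHermitian (mpow σ s *ᵥ ψ)
  rw [trace_mfun hMH]
  have hM2 : Matrix.vecMulVec (mpow σ s *ᵥ ψ) (star (mpow σ s *ᵥ ψ)) *
      Matrix.vecMulVec (mpow σ s *ᵥ ψ) (star (mpow σ s *ᵥ ψ))
      = (q : ℂ) • Matrix.vecMulVec (mpow σ s *ᵥ ψ) (star (mpow σ s *ᵥ ψ)) := by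
    rw [vecMulVec_mul_vecMulVec, hφq]
  have hMeig := eigenvalues_quad hMH q hM2
  have hMsum : ∑ i, hMH.eigenvalues i = q := by
    have h1 := trace_eq_sum_eigenvalues hMH
    rw [trace_vecMulVec, dotProduct_comm, hφq] at h1
    exact_mod_cast h1.symm
  rw [← Complex.ofReal_sum, Complex.ofReal_re]
  have hsf : (∑ i, if hMH.eigenvalues i = 0 then (0:ℝ) else hMH.eigenvalues i ^ α)
      = if q = 0 then (0:ℝ) else q ^ α :=
    sum_f_of_quad hq_pos _ hMeig hMsum (fun x => if x = 0 then 0 else x ^ α) (by simp)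
  rw [hsf, if_neg hq_pos.ne']

lemma petz_tr {σ : Matrix n n ℂ} (hσH : σ.IsHermitian) (ψ : n → ℂ) (β c : ℝ)
    (hψψ : star ψ ⬝ᵥ ψ = 1) :
    ((mpow (Matrix.vecMulVec ψ (star ψ)) β * mpow σ c).trace).re
      = ∑ i, (if hσH.eigenvalues i = 0 then (0:ℝ) else hσH.eigenvalues i ^ c) *
          ‖(star (hσH.eigenvectorUnitary : Matrix n n ℂ) *ᵥ ψ) i‖ ^ 2 := by
  have hρH : (Matrix.vecMulVec ψ (star ψ)).IsHermitian := vecMulVec_isHermitian ψ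
  have hρ2 : Matrix.vecMulVec ψ (star ψ) * Matrix.vecMulVec ψ (star ψ)
      = ((1:ℝ) : ℂ) • Matrix.vecMulVec ψ (star ψ) := by
    rw [vecMulVec_mul_vecMulVec, hψψ]
    norm_num
  have heig := eigenvalues_quad hρH 1 hρ2
  have hρpow : mpow (Matrix.vecMulVec ψ (star ψ)) β = Matrix.vecMulVec ψ (star ψ) := by
    rw [mpow]
    apply mfun_eq_self hρH
    intro i
    rcases eq_or_ne (hρH.eigenvalues i) 0 with h | h
    · simp [h]
    · have h1 : hρH.eigenvalues i = 1 := by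
        have h2 := heig i
        rw [one_mul, sq] at h2
        have h3 : hρH.eigenvalues i * hρH.eigenvalues i = hρH.eigenvalues i * 1 := by
          rw [h2, mul_one]
        exact mul_left_cancel₀ h h3
      simp [h1, h, Real.one_rpow]
  rw [hρpow, mpow, trace_vecMulVec_mul, quad_mfun hσH, sum_ofReal_mul, Complex.ofReal_re]

end Aux10

open Aux10

open QD Matrix in
/-- for a pure state `ρ₂ = |ψ⟩⟨ψ|` with `⟨ψ|σ₂|ψ⟩ > 0`,
`D*_α(ρ₂‖σ₂) = D_{2-1/α}(ρ₂‖σ₂)` for all `α ∈ (1/2, 1)`. -/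
theorem dstar_eq_dpetz_of_pure
    {n : Type*} [Fintype n] [DecidableEq n] (ψ : n → ℂ) (σ₂ : Matrix n n ℂ)
    (hρ : IsState (Matrix.vecMulVec ψ (star ψ))) (hσ : IsState σ₂)
    (hpos : 0 < ((star ψ) ⬝ᵥ σ₂.mulVec ψ).re)
    (α : ℝ) (hα : 1/2 < α) (hα1 : α < 1) :
    Dstar α (Matrix.vecMulVec ψ (star ψ)) σ₂ =
      Dpetz (2 - 1/α) (Matrix.vecMulVec ψ (star ψ)) σ₂ := by
  classical
  have hα0 : (0:ℝ) < α := by linarith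
  have hσH : σ₂.IsHermitian := hσ.1.1
  have hlam_nonneg : ∀ i, 0 ≤ hσH.eigenvalues i := fun i => hσ.1.eigenvalues_nonneg i
  -- positivity of the base quantity
  have hpos' : 0 < ∑ i, hσH.eigenvalues i *
      ‖(star (hσH.eigenvectorUnitary : Matrix n n ℂ) *ᵥ ψ) i‖ ^ 2 := by
    rw [quad_self hσH ψ, sum_ofReal_mul, Complex.ofReal_re] at hpos
    exact hpos
  obtain ⟨i0, -, hi0⟩ : ∃ i ∈ Finset.univ, 0 < hσH.eigenvalues i *
      ‖(star (hσH.eigenvectorUnitary : Matrix n n ℂ) *ᵥ ψ) i‖ ^ 2 := by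
    by_contra hcon
    push_neg at hcon
    have : ∑ i, hσH.eigenvalues i *
        ‖(star (hσH.eigenvectorUnitary : Matrix n n ℂ) *ᵥ ψ) i‖ ^ 2 ≤ 0 :=
      Finset.sum_nonpos fun i hi => hcon i hi
    linarith
  have hlam0 : 0 < hσH.eigenvalues i0 := by
    rcases (hlam_nonneg i0).lt_or_eq with h | h
    · exact h
    · exfalso; rw [← h] at hi0; simp at hi0
  have hw0 : 0 < ‖(star (hσH.eigenvectorUnitary : Matrix n n ℂ) *ᵥ ψ) i0‖ ^ 2 := by
    nlinarith
  -- the quantity q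
  obtain ⟨q, hqdef⟩ : ∃ q : ℝ, q = ∑ i,
      (if hσH.eigenvalues i = 0 then (0:ℝ) else hσH.eigenvalues i ^ (1 - (2 - 1/α))) *
        ‖(star (hσH.eigenvectorUnitary : Matrix n n ℂ) *ᵥ ψ) i‖ ^ 2 := ⟨_, rfl⟩
  have hq_pos : 0 < q := by
    rw [hqdef]
    apply Finset.sum_pos'
    · intro i _
      rcases eq_or_ne (hσH.eigenvalues i) 0 with h | h
      · simp [h]
      · rw [if_neg h]
        exact mul_nonneg (Real.rpow_nonneg (hlam_nonneg i) _) (sq_nonneg _)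
    · refine ⟨i0, Finset.mem_univ _, ?_⟩
      rw [if_neg hlam0.ne']
      exact mul_pos (Real.rpow_pos_of_pos hlam0 _) hw0
  -- norm-1 of ψ
  have hψψ : star ψ ⬝ᵥ ψ = 1 := by
    rw [dotProduct_comm, ← Aux10.trace_vecMulVec]
    exact hρ.2
  -- mpow multiplication
  have hAA : mpow σ₂ ((1 - α)/(2*α)) * mpow σ₂ ((1 - α)/(2*α)) = mpow σ₂ (1 - (2 - 1/α)) := by
    simp only [mpow]
    rw [mfun_mul_mfun hσH]
    apply mfun_congr hσH
    intro i
    rcases eq_or_ne (hσH.eigenvalues i) 0 with h | h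
    · simp [h]
    · have hpos2 : 0 < hσH.eigenvalues i := lt_of_le_of_ne (hlam_nonneg i) (Ne.symm h)
      simp only [if_neg h]
      rw [← Real.rpow_add hpos2]
      congr 1
      field_simp
      ring
  -- the sandwiched inner product
  have hφq : star (mpow σ₂ ((1 - α)/(2*α)) *ᵥ ψ) ⬝ᵥ (mpow σ₂ ((1 - α)/(2*α)) *ᵥ ψ) = (q : ℂ) := by
    have hAH : (mpow σ₂ ((1 - α)/(2*α))).IsHermitian := mfun_isHermitian hσH _
    rw [Matrix.star_mulVec, hAH.eq, ← Matrix.dotProduct_mulVec, Matrix.mulVec_mulVec, hAA,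
      mpow, quad_mfun hσH, hqdef, sum_ofReal_mul]
  have hQ := qstar_val hσH ψ ((1 - α)/(2*α)) α q hq_pos hφq
  have hP := (petz_tr hσH ψ (2 - 1/α) (1 - (2 - 1/α)) hψψ).trans hqdef.symm
  simp only [Dstar, Dpetz, Qstar]
  rw [hQ, hP]
  have hlog : Real.logb 2 (q ^ α) = α * Real.logb 2 q := by
    rw [Real.logb, Real.logb, Real.log_rpow hq_pos]
    ring
  rw [hlog]
  have hα1' : α - 1 ≠ 0 := by intro h; linarith
  have hβ : ((2 - 1/α) - 1)⁻¹ = α * (α - 1)⁻¹ := by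
    rw [show (2 - 1/α) - 1 = (α - 1)/α by field_simp; ring]
    rw [inv_div, div_eq_mul_inv]
  rw [hβ]
  ring
end
end

section
/- Continuity bound used in the achievability proof: for quantum states ω, τ on a Hilbert space H of dimension d, |H(ω) − H(τ)| ≤ (1/2)‖ω − τ‖₁ · log d + h((1/2)‖ω − τ‖₁) whenever (1/2)‖ω−τ‖₁ ≤ 1, where h is the binary entropy (Fannes–Audenaert inequality). -/
open scoped Matrix ComplexOrder

noncomputable section
open Classical

namespace FA

open Matrix QD Polynomial Real Finset
open scoped ComplexOrder

def ent2 (x : ℝ) : ℝ := -(x * Real.logb 2 x)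

lemma ent2_eq (x : ℝ) : ent2 x = Real.negMulLog x / Real.log 2 := by
  simp [ent2, Real.negMulLog, Real.logb, div_eq_mul_inv]; ring

lemma ent2_zero : ent2 0 = 0 := by simp [ent2]
lemma ent2_one : ent2 1 = 0 := by simp [ent2]

lemma ent2_nonneg {x : ℝ} (h0 : 0 ≤ x) (h1 : x ≤ 1) : 0 ≤ ent2 x := by
  rw [ent2_eq]
  exact div_nonneg (Real.negMulLog_nonneg h0 h1) (Real.log_nonneg one_le_two)

lemma concaveOn_ent2 : ConcaveOn ℝ (Set.Ici 0) ent2 := by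
  have h := Real.concaveOn_negMulLog.smul (c := (Real.log 2)⁻¹) (by positivity)
  have he : ent2 = fun x => (Real.log 2)⁻¹ • Real.negMulLog x := by
    ext x
    rw [ent2_eq]
    simp [smul_eq_mul, div_eq_mul_inv, mul_comm]
  rw [he]; exact h

lemma ent2_mul (c x : ℝ) : ent2 (c * x) = x * ent2 c + c * ent2 x := by
  rcases eq_or_ne c 0 with rfl | hc
  · simp [ent2]
  rcases eq_or_ne x 0 with rfl | hx
  · simp [ent2]
  simp only [ent2, Real.logb, Real.log_mul hc hx]
  ring

lemma ent2_add_le {x y : ℝ} (hx : 0 ≤ x) (hy : 0 ≤ y) :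
    ent2 (x + y) ≤ ent2 x + ent2 y := by
  have key : ∀ a b : ℝ, 0 ≤ a → 0 ≤ b → -(a * Real.logb 2 (a + b)) ≤ ent2 a := by
    intro a b ha hb
    rcases eq_or_lt_of_le ha with rfl | ha'
    · simp [ent2]
    · rw [ent2, neg_le_neg_iff]
      have : Real.logb 2 a ≤ Real.logb 2 (a + b) :=
        Real.logb_le_logb_of_le one_lt_two ha' (by linarith)
      nlinarith
  have h1 := key x y hx hy
  have h2 := key y x hy hx
  have : ent2 (x + y) = -(x * Real.logb 2 (x + y)) + -(y * Real.logb 2 (y + x)) := by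
    rw [ent2]; rw [add_comm y x]; ring
  rw [this]
  linarith

def binEnt' (x : ℝ) : ℝ := ent2 x + ent2 (1 - x)

variable {n : Type*} [Fintype n]

lemma sum_ent2_nonneg {p : n → ℝ} (h0 : ∀ i, 0 ≤ p i) (h1 : ∑ i, p i = 1) :
    0 ≤ ∑ i, ent2 (p i) := by
  refine Finset.sum_nonneg fun i _ => ent2_nonneg (h0 i) ?_
  calc p i ≤ ∑ j, p j := Finset.single_le_sum (fun j _ => h0 j) (mem_univ i)
    _ = 1 := h1

lemma sum_ent2_le_logb_card [Nonempty n] {p : n → ℝ} (h0 : ∀ i, 0 ≤ p i)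
    (h1 : ∑ i, p i = 1) :
    ∑ i, ent2 (p i) ≤ Real.logb 2 (Fintype.card n) := by
  set d : ℝ := (Fintype.card n : ℝ) with hd
  have hd0 : 0 < d := by
    simp only [hd]; exact_mod_cast Fintype.card_pos
  have hJ := concaveOn_ent2.le_map_sum (t := Finset.univ) (w := fun _ : n => d⁻¹)
    (p := p) (fun i _ => by positivity)
    (by simp [Finset.card_univ, hd]) (fun i _ => h0 i)
  have hsum : ∑ i : n, d⁻¹ • p i = d⁻¹ := by
    rw [← Finset.smul_sum, h1]; simp
  rw [hsum] at hJ
  have he : ent2 d⁻¹ = d⁻¹ * Real.logb 2 d := by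
    rw [ent2, Real.logb, Real.logb, Real.log_inv]; ring
  have : ∑ i : n, d⁻¹ • ent2 (p i) = d⁻¹ * ∑ i, ent2 (p i) := by
    rw [← Finset.smul_sum]; simp [smul_eq_mul]
  rw [this, he] at hJ
  calc ∑ i, ent2 (p i) = d * (d⁻¹ * ∑ i, ent2 (p i)) := by field_simp
    _ ≤ d * (d⁻¹ * Real.logb 2 d) := by
        apply mul_le_mul_of_nonneg_left hJ hd0.le
    _ = Real.logb 2 d := by field_simp

variable {n : Type*} [Fintype n]

lemma concaveOn_binEnt' : ConcaveOn ℝ (Set.Icc (0:ℝ) 1) binEnt' := by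
  have c1 : ConcaveOn ℝ (Set.Icc (0:ℝ) 1) ent2 :=
    concaveOn_ent2.subset (fun x hx => hx.1) (convex_Icc 0 1)
  have c2 : ConcaveOn ℝ (Set.Icc (0:ℝ) 1) (fun x => ent2 (1 - x)) := by
    refine ⟨convex_Icc 0 1, fun x hx y hy a b ha hb hab => ?_⟩
    have h := concaveOn_ent2.2 (x := 1 - x) (y := 1 - y)
      (by simp [Set.mem_Ici]; linarith [hx.2]) (by simp [Set.mem_Ici]; linarith [hy.2]) ha hb hab
    have harg : a • (1 - x) + b • (1 - y) = 1 - (a • x + b • y) := by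
      simp only [smul_eq_mul]; nlinarith [hab]
    rw [harg] at h
    exact h
  exact c1.add c2

lemma classical_extend {D L t T : ℝ} (hL : 0 ≤ L)
    (h1 : D ≤ t * L + binEnt' t) (h2 : D ≤ L)
    (ht0 : 0 ≤ t) (htT : t ≤ T) (hT1 : T ≤ 1) :
    D ≤ T * L + binEnt' T := by
  have hf : ConcaveOn ℝ (Set.Icc (0:ℝ) 1) (fun x => x * L + binEnt' x) := by
    refine ConcaveOn.add ⟨convex_Icc 0 1, fun x _ y _ a b _ _ _ => ?_⟩ concaveOn_binEnt'
    simp only [smul_eq_mul]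
    exact le_of_eq (by ring)
  have hB1 : binEnt' 1 = 0 := by simp [binEnt', ent2]
  rcases eq_or_lt_of_le (htT.trans hT1) with ht1 | ht1
  · have : T = 1 := le_antisymm hT1 (ht1 ▸ htT)
    rw [this, hB1]
    linarith
  · set s := (T - t) / (1 - t) with hs
    have hs0 : 0 ≤ s := div_nonneg (by linarith) (by linarith)
    have hs1 : s ≤ 1 := by
      rw [hs, div_le_one (by linarith)]; linarith
    have h1t : (1:ℝ) - t ≠ 0 := by linarith
    have hT : (1 - s) • t + s • (1:ℝ) = T := by
      simp only [smul_eq_mul, hs]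
      field_simp
      ring
    have hconc := hf.2 (x := t) (y := 1) ⟨ht0, htT.trans hT1⟩
      ⟨zero_le_one, le_refl 1⟩ (by linarith : (0:ℝ) ≤ 1 - s) hs0 (by ring)
    rw [hT] at hconc
    have : (1 - s) • (t * L + binEnt' t) + s • (1 * L + binEnt' 1) ≤ T * L + binEnt' T := hconc
    rw [hB1] at this
    simp only [smul_eq_mul, one_mul, add_zero] at this
    nlinarith [this, h1, h2]

/-- Classical continuity bound at the exact total variation. -/
lemma classical_core [Nonempty n] (p q : n → ℝ) (hp0 : ∀ i, 0 ≤ p i) (hq0 : ∀ i, 0 ≤ q i)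
    (hp1 : ∑ i, p i = 1) (hq1 : ∑ i, q i = 1) :
    ∑ i, ent2 (p i) - ∑ i, ent2 (q i) ≤
      (1 - ∑ i, min (p i) (q i)) * Real.logb 2 (Fintype.card n)
        + binEnt' (1 - ∑ i, min (p i) (q i)) := by
  set L := Real.logb 2 (Fintype.card n) with hL
  have hL0 : 0 ≤ L := by
    rw [hL]
    apply Real.logb_nonneg one_lt_two
    exact_mod_cast Fintype.card_pos
  set m : n → ℝ := fun i => min (p i) (q i) with hm
  set s := ∑ i, m i with hsdef
  have hm0 : ∀ i, 0 ≤ m i := fun i => le_min (hp0 i) (hq0 i)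
  have hmp : ∀ i, m i ≤ p i := fun i => min_le_left _ _
  have hmq : ∀ i, m i ≤ q i := fun i => min_le_right _ _
  have hs0 : 0 ≤ s := Finset.sum_nonneg fun i _ => hm0 i
  have hs1 : s ≤ 1 := hp1 ▸ Finset.sum_le_sum fun i _ => hmp i
  rcases eq_or_lt_of_le hs1 with hseq | hslt
  · -- t = 0 : p = q
    have hpm : ∀ i ∈ Finset.univ, p i - m i = 0 := by
      rw [← Finset.sum_eq_zero_iff_of_nonneg (fun i _ => by linarith [hmp i])]
      rw [Finset.sum_sub_distrib, hp1, ← hsdef, hseq, sub_self]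
    have hqm : ∀ i ∈ Finset.univ, q i - m i = 0 := by
      rw [← Finset.sum_eq_zero_iff_of_nonneg (fun i _ => by linarith [hmq i])]
      rw [Finset.sum_sub_distrib, hq1, ← hsdef, hseq, sub_self]
    have hpq : ∀ i, p i = q i := fun i => by
      have h1 := hpm i (mem_univ i); have h2 := hqm i (mem_univ i); linarith
    have : ∑ i, ent2 (p i) = ∑ i, ent2 (q i) := by
      apply Finset.sum_congr rfl; intro i _; rw [hpq i]
    rw [this, hseq, sub_self]
    simp [binEnt', ent2]
  · rcases eq_or_lt_of_le hs0 with hseq0 | hs0'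
    · -- t = 1
      rw [← hseq0, sub_zero]
      have h1 : ∑ i, ent2 (p i) ≤ L := sum_ent2_le_logb_card hp0 hp1
      have h2 : 0 ≤ ∑ i, ent2 (q i) := sum_ent2_nonneg hq0 hq1
      have : binEnt' 1 = 0 := by simp [binEnt', ent2]
      rw [this]; linarith
    · -- 0 < s < 1, i.e. 0 < t < 1
      set t := 1 - s with htdef
      have ht0 : 0 < t := by simp only [htdef]; linarith
      have ht1 : t < 1 := by simp only [htdef]; linarith
      set a : n → ℝ := fun i => p i - m i with ha
      set b : n → ℝ := fun i => q i - m i with hb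
      have ha0 : ∀ i, 0 ≤ a i := fun i => by simp only [ha]; linarith [hmp i]
      have hb0 : ∀ i, 0 ≤ b i := fun i => by simp only [hb]; linarith [hmq i]
      have hasum : ∑ i, a i = t := by
        simp only [ha, htdef]; rw [Finset.sum_sub_distrib, hp1, ← hsdef]
      have hbsum : ∑ i, b i = t := by
        simp only [hb, htdef]; rw [Finset.sum_sub_distrib, hq1, ← hsdef]
      set S := ∑ i, ent2 (m i / s) with hS
      -- (i) subadditivity
      have hi : ∑ i, ent2 (p i) ≤ ∑ i, ent2 (m i) + ∑ i, ent2 (a i) := by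
        rw [← Finset.sum_add_distrib]
        apply Finset.sum_le_sum
        intro i _
        have : p i = m i + a i := by simp only [ha]; ring
        rw [this]
        exact ent2_add_le (hm0 i) (ha0 i)
      -- (ii) scaling for m
      have hii : ∑ i, ent2 (m i) = ent2 s + s * S := by
        have : ∀ i, ent2 (m i) = (m i / s) * ent2 s + s * ent2 (m i / s) := by
          intro i
          have : m i = s * (m i / s) := by field_simp
          conv_lhs => rw [this]
          exact ent2_mul s (m i / s)
        rw [Finset.sum_congr rfl (fun i _ => this i), Finset.sum_add_distrib,
          ← Finset.sum_mul, ← Finset.sum_div, ← hsdef, ← Finset.mul_sum, ← hS]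
        field_simp
      -- (iii) scaling + entropy bound for a
      have hiii : ∑ i, ent2 (a i) ≤ ent2 t + t * L := by
        have heq : ∑ i, ent2 (a i) = ent2 t + t * ∑ i, ent2 (a i / t) := by
          have : ∀ i, ent2 (a i) = (a i / t) * ent2 t + t * ent2 (a i / t) := by
            intro i
            have : a i = t * (a i / t) := by field_simp
            conv_lhs => rw [this]
            exact ent2_mul t (a i / t)
          rw [Finset.sum_congr rfl (fun i _ => this i), Finset.sum_add_distrib,
            ← Finset.sum_mul, ← Finset.sum_div, hasum, ← Finset.mul_sum]
          field_simp
        rw [heq]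
        have hbound : ∑ i, ent2 (a i / t) ≤ L := by
          apply sum_ent2_le_logb_card (fun i => div_nonneg (ha0 i) ht0.le)
          rw [← Finset.sum_div, hasum]; field_simp
        have := mul_le_mul_of_nonneg_left hbound ht0.le
        linarith
      -- (iv) concavity lower bound for q
      have hiv : s * S ≤ ∑ i, ent2 (q i) := by
        rw [hS, Finset.mul_sum]
        apply Finset.sum_le_sum
        intro i _
        have hbt : b i ≤ t := by
          rw [← hbsum]
          exact Finset.single_le_sum (fun j _ => hb0 j) (mem_univ i)
        have hconc := concaveOn_ent2.2 (x := m i / s) (y := b i / t)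
          (Set.mem_Ici.2 (div_nonneg (hm0 i) hs0'.le)) (Set.mem_Ici.2 (div_nonneg (hb0 i) ht0.le))
          hs0'.le ht0.le (by simp only [htdef]; ring)
        have harg : s • (m i / s) + t • (b i / t) = q i := by
          simp only [smul_eq_mul, hb]
          field_simp
          ring
        rw [harg] at hconc
        have hb2 : 0 ≤ t • ent2 (b i / t) := by
          apply smul_nonneg ht0.le
          apply ent2_nonneg (div_nonneg (hb0 i) ht0.le)
          rw [div_le_one ht0]; exact hbt
        have : s • ent2 (m i / s) ≤ ent2 (q i) := by
          calc s • ent2 (m i / s) ≤ s • ent2 (m i / s) + t • ent2 (b i / t) := by linarith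
            _ ≤ ent2 (q i) := hconc
        simpa [smul_eq_mul] using this
      -- combine
      have hBE : binEnt' t = ent2 t + ent2 s := by
        simp only [binEnt', htdef]; ring_nf
      rw [hBE]
      linarith

variable {n : Type*} [Fintype n]

lemma classical_final [Nonempty n] (p q : n → ℝ) (hp0 : ∀ i, 0 ≤ p i) (hq0 : ∀ i, 0 ≤ q i)
    (hp1 : ∑ i, p i = 1) (hq1 : ∑ i, q i = 1) {T : ℝ}
    (hT : (∑ i, |p i - q i|) / 2 ≤ T) (hT1 : T ≤ 1) :
    ∑ i, ent2 (p i) - ∑ i, ent2 (q i) ≤ T * Real.logb 2 (Fintype.card n) + binEnt' T := by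
  set L := Real.logb 2 (Fintype.card n) with hL
  have hL0 : 0 ≤ L := Real.logb_nonneg one_lt_two (by exact_mod_cast Fintype.card_pos)
  have htv : (∑ i, |p i - q i|) / 2 = 1 - ∑ i, min (p i) (q i) := by
    have habs : ∀ i, |p i - q i| = p i + q i - 2 * min (p i) (q i) := by
      intro i
      rcases le_total (p i) (q i) with h | h
      · rw [abs_of_nonpos (by linarith), min_eq_left h]; ring
      · rw [abs_of_nonneg (by linarith), min_eq_right h]; ring
    rw [Finset.sum_congr rfl (fun i _ => habs i)]
    rw [Finset.sum_sub_distrib, Finset.sum_add_distrib, hp1, hq1, ← Finset.mul_sum]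
    ring
  set t := 1 - ∑ i, min (p i) (q i) with htdef
  have ht0 : 0 ≤ t := by rw [← htv]; positivity
  have htT : t ≤ T := htv ▸ hT
  have h1 : ∑ i, ent2 (p i) - ∑ i, ent2 (q i) ≤ t * L + binEnt' t :=
    classical_core p q hp0 hq0 hp1 hq1
  have h2 : ∑ i, ent2 (p i) - ∑ i, ent2 (q i) ≤ L := by
    have := sum_ent2_le_logb_card hp0 hp1
    have := sum_ent2_nonneg hq0 hq1
    linarith
  exact classical_extend hL0 h1 h2 ht0 htT hT1

variable {n : Type*} [Fintype n] [DecidableEq n]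

lemma mfun_eq (f : ℝ → ℝ) {A : Matrix n n ℂ} (hA : A.IsHermitian) :
    mfun f A = (hA.eigenvectorUnitary : Matrix n n ℂ) *
      Matrix.diagonal (fun i => (f (hA.eigenvalues i) : ℂ)) *
      (star (hA.eigenvectorUnitary : Matrix n n ℂ)) := dif_pos hA

lemma spectral (A : Matrix n n ℂ) (hA : A.IsHermitian) :
    A = (hA.eigenvectorUnitary : Matrix n n ℂ) *
      Matrix.diagonal (fun i => ((hA.eigenvalues i : ℝ) : ℂ)) *
      (star (hA.eigenvectorUnitary : Matrix n n ℂ)) := by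
  have := hA.spectral_theorem
  convert this using 2
  rfl

lemma star_mul_self_mul_eq_diagonal' {A : Matrix n n ℂ} (hA : A.IsHermitian) :
    star (hA.eigenvectorUnitary : Matrix n n ℂ) * A * (hA.eigenvectorUnitary : Matrix n n ℂ) =
      Matrix.diagonal (RCLike.ofReal ∘ hA.eigenvalues) := by
  have := hA.conjStarAlgAut_star_eigenvectorUnitary
  simpa [Unitary.conjStarAlgAut_apply] using this

lemma trace_mfun (f : ℝ → ℝ) {A : Matrix n n ℂ} (hA : A.IsHermitian) :
    (mfun f A).trace = ∑ i, (f (hA.eigenvalues i) : ℂ) := by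
  rw [mfun_eq f hA, Matrix.trace_mul_cycle,
    Unitary.coe_star_mul_self hA.eigenvectorUnitary, one_mul, Matrix.trace_diagonal]

lemma trace_mul_mfun (f : ℝ → ℝ) {A : Matrix n n ℂ} (hA : A.IsHermitian) :
    (A * mfun f A).trace = ∑ i, ((hA.eigenvalues i : ℂ) * (f (hA.eigenvalues i) : ℂ)) := by
  rw [mfun_eq f hA]
  simp only [← Matrix.mul_assoc]
  rw [Matrix.trace_mul_cycle, ← Matrix.mul_assoc, star_mul_self_mul_eq_diagonal' hA,
    Matrix.diagonal_mul_diagonal, Matrix.trace_diagonal]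
  rfl

lemma vnEnt_eq {A : Matrix n n ℂ} (hA : A.IsHermitian) :
    vnEnt A = ∑ i, ent2 (hA.eigenvalues i) := by
  rw [vnEnt, mlog, trace_mul_mfun _ hA]
  rw [show ∑ i, ((hA.eigenvalues i : ℂ) * ((Real.logb 2 (hA.eigenvalues i) : ℝ) : ℂ))
      = ((∑ i, hA.eigenvalues i * Real.logb 2 (hA.eigenvalues i) : ℝ) : ℂ) by push_cast; rfl]
  rw [Complex.ofReal_re]
  simp [ent2, ← Finset.sum_neg_distrib]

variable {n : Type*} [Fintype n] [DecidableEq n]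

lemma charpoly_diagonal (v : n → ℂ) :
    (Matrix.diagonal v).charpoly = ∏ i, (X - C (v i)) := by
  rw [Matrix.charpoly]
  have : charmatrix (Matrix.diagonal v) = Matrix.diagonal (fun i => (X : ℂ[X]) - C (v i)) := by
    ext i j
    rcases eq_or_ne i j with rfl | hij
    · rw [charmatrix_apply_eq, Matrix.diagonal_apply_eq, Matrix.diagonal_apply_eq]
    · rw [charmatrix_apply_ne _ _ _ hij, Matrix.diagonal_apply_ne _ hij,
        Matrix.diagonal_apply_ne _ hij, map_zero, neg_zero]
  rw [this, Matrix.det_diagonal]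

lemma charpoly_unitary_conj (U : Matrix.unitaryGroup n ℂ) (M : Matrix n n ℂ) :
    ((U : Matrix n n ℂ) * M * star (U : Matrix n n ℂ)).charpoly = M.charpoly := by
  classical
  set cm : Matrix n n ℂ →+* Matrix n n ℂ[X] := (C : ℂ →+* ℂ[X]).mapMatrix with hcm
  have key : charmatrix ((U : Matrix n n ℂ) * M * star (U : Matrix n n ℂ)) =
      cm (U : Matrix n n ℂ) * charmatrix M * cm (star (U : Matrix n n ℂ)) := by
    have hcmU : cm (U : Matrix n n ℂ) * cm (star (U : Matrix n n ℂ)) = 1 := by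
      rw [← _root_.map_mul, Matrix.mem_unitaryGroup_iff.mp U.2, _root_.map_one]
    rw [charmatrix, charmatrix]
    rw [Matrix.mul_sub, Matrix.sub_mul]
    congr 1
    · calc (Matrix.scalar n (X : ℂ[X]))
          = Matrix.scalar n (X : ℂ[X]) * (cm (U : Matrix n n ℂ) * cm (star (U : Matrix n n ℂ))) := by
            rw [hcmU, mul_one]
        _ = cm (U : Matrix n n ℂ) * Matrix.scalar n (X : ℂ[X]) * cm (star (U : Matrix n n ℂ)) := by
            rw [← mul_assoc, (Matrix.scalar_commute (X : ℂ[X]) (fun r => Commute.all _ _)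
              (cm (U : Matrix n n ℂ))).eq]
    · show cm ((U : Matrix n n ℂ) * M * star (U : Matrix n n ℂ)) = _
      rw [_root_.map_mul, _root_.map_mul]
  rw [Matrix.charpoly, key, Matrix.det_mul, Matrix.det_mul, mul_comm, ← mul_assoc,
    ← Matrix.det_mul, ← _root_.map_mul cm (star (U : Matrix n n ℂ)) (U : Matrix n n ℂ),
    Matrix.UnitaryGroup.star_mul_self, _root_.map_one, Matrix.det_one, one_mul, Matrix.charpoly]

lemma eig_sum_of_decomp {B : Matrix n n ℂ} (hB : B.IsHermitian)
    (U : Matrix.unitaryGroup n ℂ) (c : n → ℝ)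
    (hBU : B = (U : Matrix n n ℂ) * Matrix.diagonal (fun i => ((c i : ℝ) : ℂ)) *
      star (U : Matrix n n ℂ)) (f : ℝ → ℝ) :
    ∑ i, f (hB.eigenvalues i) = ∑ i, f (c i) := by
  -- charpoly computations
  have h1 : B.charpoly = ∏ i, (X - C ((hB.eigenvalues i : ℝ) : ℂ)) := by
    conv_lhs => rw [spectral B hB]
    rw [charpoly_unitary_conj hB.eigenvectorUnitary, charpoly_diagonal]
  have h2 : B.charpoly = ∏ i, (X - C ((c i : ℝ) : ℂ)) := by
    conv_lhs => rw [hBU]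
    rw [charpoly_unitary_conj U, charpoly_diagonal]
  -- multiset of roots
  have hmul : ∀ (v : n → ℝ), (∏ i, (X - C ((v i : ℝ) : ℂ))) =
      ((Finset.univ.val.map (fun i => ((v i : ℝ) : ℂ))).map (fun a => X - C a)).prod := by
    intro v
    rw [Multiset.map_map]
    rfl
  have hroots : (Finset.univ.val.map (fun i => ((hB.eigenvalues i : ℝ) : ℂ)))
      = (Finset.univ.val.map (fun i => ((c i : ℝ) : ℂ))) := by
    have := h1.symm.trans h2
    rw [hmul hB.eigenvalues, hmul c] at this
    have := congrArg Polynomial.roots this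
    rwa [Polynomial.roots_multiset_prod_X_sub_C, Polynomial.roots_multiset_prod_X_sub_C] at this
  have hrootsR : (Finset.univ.val.map hB.eigenvalues) = (Finset.univ.val.map c) := by
    apply Multiset.map_injective (f := fun x : ℝ => (x : ℂ)) Complex.ofReal_injective
    rw [Multiset.map_map, Multiset.map_map]
    exact hroots
  rw [Finset.sum, Finset.sum,
    show (fun i => f (hB.eigenvalues i)) = f ∘ hB.eigenvalues from rfl,
    show (fun i => f (c i)) = f ∘ c from rfl,
    ← Multiset.map_map f hB.eigenvalues, ← Multiset.map_map f c, hrootsR]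

variable {n : Type*} [Fintype n] [DecidableEq n]

lemma conj_diag_mul (U : Matrix.unitaryGroup n ℂ) (d e : n → ℂ) :
    ((U : Matrix n n ℂ) * Matrix.diagonal d * star (U : Matrix n n ℂ)) *
      ((U : Matrix n n ℂ) * Matrix.diagonal e * star (U : Matrix n n ℂ)) =
    (U : Matrix n n ℂ) * Matrix.diagonal (fun i => d i * e i) * star (U : Matrix n n ℂ) := by
  have h : star (U : Matrix n n ℂ) * (U : Matrix n n ℂ) = 1 :=
    Matrix.UnitaryGroup.star_mul_self U
  calc ((U : Matrix n n ℂ) * Matrix.diagonal d * star (U : Matrix n n ℂ)) *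
      ((U : Matrix n n ℂ) * Matrix.diagonal e * star (U : Matrix n n ℂ))
      = (U : Matrix n n ℂ) * Matrix.diagonal d *
        ((star (U : Matrix n n ℂ) * (U : Matrix n n ℂ)) *
          (Matrix.diagonal e * star (U : Matrix n n ℂ))) := by
        simp only [Matrix.mul_assoc]
    _ = (U : Matrix n n ℂ) * Matrix.diagonal (fun i => d i * e i) * star (U : Matrix n n ℂ) := by
        rw [h, one_mul, ← Matrix.mul_assoc, Matrix.mul_assoc ((U : Matrix n n ℂ)),
          Matrix.diagonal_mul_diagonal]

lemma trace_eq_sum_eig {A : Matrix n n ℂ} (hA : A.IsHermitian) :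
    A.trace = ∑ i, ((hA.eigenvalues i : ℝ) : ℂ) := by
  set V := hA.eigenvectorUnitary with hV
  set lam := hA.eigenvalues with hlam
  have hsp : A = (V : Matrix n n ℂ) * Matrix.diagonal (fun i => ((lam i : ℝ) : ℂ)) *
      star (V : Matrix n n ℂ) := spectral A hA
  rw [hsp, Matrix.trace_mul_cycle, Matrix.UnitaryGroup.star_mul_self V, one_mul,
    Matrix.trace_diagonal]

lemma traceNorm_herm {A : Matrix n n ℂ} (hA : A.IsHermitian) :
    traceNorm A = ∑ i, |hA.eigenvalues i| := by
  set V := hA.eigenvectorUnitary with hV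
  set lam := hA.eigenvalues with hlam
  have hsp : A = (V : Matrix n n ℂ) * Matrix.diagonal (fun i => ((lam i : ℝ) : ℂ)) *
      star (V : Matrix n n ℂ) := spectral A hA
  have hB : (Aᴴ * A).IsHermitian := (Matrix.posSemidef_conjTranspose_mul_self A).1
  have hdec : Aᴴ * A = (V : Matrix n n ℂ) *
      Matrix.diagonal (fun i => ((lam i ^ 2 : ℝ) : ℂ)) * star (V : Matrix n n ℂ) := by
    rw [hA.eq, hsp, conj_diag_mul]
    congr 1
    congr 1
    ext i
    push_cast
    ring
  have hsum := eig_sum_of_decomp hB V (fun i => lam i ^ 2) hdec Real.sqrt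
  rw [traceNorm, trace_mfun Real.sqrt hB]
  rw [show (∑ i, ((Real.sqrt (hB.eigenvalues i) : ℝ) : ℂ))
      = ((∑ i, Real.sqrt (hB.eigenvalues i) : ℝ) : ℂ) by push_cast; rfl, Complex.ofReal_re]
  rw [hsum]
  apply Finset.sum_congr rfl
  intro i _
  exact Real.sqrt_sq_eq_abs (lam i)

lemma trD_herm (ω τ : Matrix n n ℂ) (hd : (ω - τ).IsHermitian) :
    trD ω τ = (∑ i, |hd.eigenvalues i|) / 2 := by
  rw [trD, traceNorm_herm hd]

/-- Diagonal entries of `Uᴴ A U` as a doubly-stochastic average of eigenvalues. -/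
lemma diag_entries {A : Matrix n n ℂ} (hA : A.IsHermitian) (U : Matrix.unitaryGroup n ℂ) :
    ∃ w : n → n → ℝ, (∀ i j, 0 ≤ w i j) ∧ (∀ i, ∑ j, w i j = 1) ∧ (∀ j, ∑ i, w i j = 1) ∧
      ∀ i, ((star (U : Matrix n n ℂ) * A * (U : Matrix n n ℂ)) i i).re
        = ∑ j, w i j * hA.eigenvalues j := by
  set V := hA.eigenvectorUnitary with hV
  set lam := hA.eigenvalues with hlam
  have hsp : A = (V : Matrix n n ℂ) * Matrix.diagonal (fun i => ((lam i : ℝ) : ℂ)) *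
      star (V : Matrix n n ℂ) := spectral A hA
  set W : Matrix n n ℂ := star (U : Matrix n n ℂ) * (V : Matrix n n ℂ) with hW
  have hWW : W * Wᴴ = 1 := by
    rw [hW]
    rw [show (star (U : Matrix n n ℂ) * (V : Matrix n n ℂ))ᴴ
        = star (V : Matrix n n ℂ) * (U : Matrix n n ℂ) by
      simp [Matrix.conjTranspose_mul, Matrix.star_eq_conjTranspose]]
    calc star (U : Matrix n n ℂ) * (V : Matrix n n ℂ) *
        (star (V : Matrix n n ℂ) * (U : Matrix n n ℂ))
        = star (U : Matrix n n ℂ) *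
          (((V : Matrix n n ℂ) * star (V : Matrix n n ℂ)) * (U : Matrix n n ℂ)) := by
          simp only [Matrix.mul_assoc]
      _ = 1 := by
          rw [Matrix.mem_unitaryGroup_iff.mp V.2, one_mul, Matrix.UnitaryGroup.star_mul_self U]
  have hWW2 : Wᴴ * W = 1 := by
    rw [hW]
    rw [show (star (U : Matrix n n ℂ) * (V : Matrix n n ℂ))ᴴ
        = star (V : Matrix n n ℂ) * (U : Matrix n n ℂ) by
      simp [Matrix.conjTranspose_mul, Matrix.star_eq_conjTranspose]]
    calc star (V : Matrix n n ℂ) * (U : Matrix n n ℂ) *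
        (star (U : Matrix n n ℂ) * (V : Matrix n n ℂ))
        = star (V : Matrix n n ℂ) *
          (((U : Matrix n n ℂ) * star (U : Matrix n n ℂ)) * (V : Matrix n n ℂ)) := by
          simp only [Matrix.mul_assoc]
      _ = 1 := by
          rw [Matrix.mem_unitaryGroup_iff.mp U.2, one_mul, Matrix.UnitaryGroup.star_mul_self V]
  refine ⟨fun i j => Complex.normSq (W i j), fun i j => Complex.normSq_nonneg _, ?_, ?_, ?_⟩
  · intro i
    have h1 : (W * Wᴴ) i i = 1 := by rw [hWW, Matrix.one_apply_eq]
    rw [Matrix.mul_apply] at h1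
    have : ∀ j, W i j * Wᴴ j i = ((Complex.normSq (W i j) : ℝ) : ℂ) := by
      intro j
      rw [Matrix.conjTranspose_apply, Complex.star_def, Complex.mul_conj]
    rw [Finset.sum_congr rfl (fun j _ => this j)] at h1
    have h2 : ((∑ j, Complex.normSq (W i j) : ℝ) : ℂ) = 1 := by push_cast at h1 ⊢; exact h1
    exact_mod_cast h2
  · intro j
    have h1 : (Wᴴ * W) j j = 1 := by rw [hWW2, Matrix.one_apply_eq]
    rw [Matrix.mul_apply] at h1
    have : ∀ i, Wᴴ j i * W i j = ((Complex.normSq (W i j) : ℝ) : ℂ) := by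
      intro i
      rw [Matrix.conjTranspose_apply, mul_comm, Complex.star_def, Complex.mul_conj]
    rw [Finset.sum_congr rfl (fun i _ => this i)] at h1
    have h2 : ((∑ i, Complex.normSq (W i j) : ℝ) : ℂ) = 1 := by push_cast at h1 ⊢; exact h1
    exact_mod_cast h2
  · intro i
    have hform : star (U : Matrix n n ℂ) * A * (U : Matrix n n ℂ)
        = W * Matrix.diagonal (fun i => ((lam i : ℝ) : ℂ)) * Wᴴ := by
      rw [hsp, hW]
      rw [show (star (U : Matrix n n ℂ) * (V : Matrix n n ℂ))ᴴ
          = star (V : Matrix n n ℂ) * (U : Matrix n n ℂ) by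
        simp [Matrix.conjTranspose_mul, Matrix.star_eq_conjTranspose]]
      simp only [Matrix.mul_assoc]
    rw [hform]
    have : (W * Matrix.diagonal (fun i => ((lam i : ℝ) : ℂ)) * Wᴴ) i i
        = ∑ j, ((Complex.normSq (W i j) * lam j : ℝ) : ℂ) := by
      rw [Matrix.mul_apply]
      apply Finset.sum_congr rfl
      intro j _
      rw [Matrix.mul_diagonal, Matrix.conjTranspose_apply]
      rw [show W i j * ((lam j : ℝ) : ℂ) * star (W i j)
          = (W i j * star (W i j)) * ((lam j : ℝ) : ℂ) by ring]
      rw [show W i j * star (W i j) = ((Complex.normSq (W i j) : ℝ) : ℂ) by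
        rw [Complex.star_def, Complex.mul_conj]]
      push_cast
      ring
    rw [this]
    rw [show (∑ j, ((Complex.normSq (W i j) * lam j : ℝ) : ℂ))
        = ((∑ j, Complex.normSq (W i j) * lam j : ℝ) : ℂ) by push_cast; rfl, Complex.ofReal_re]

variable {n : Type*} [Fintype n] [DecidableEq n]

lemma sum_eigenvalues_eq_one {ρ : Matrix n n ℂ} (hρ : IsState ρ) :
    ∑ i, (hρ.1.1.eigenvalues i) = 1 := by
  have h : ((∑ i, hρ.1.1.eigenvalues i : ℝ) : ℂ) = ((1 : ℝ) : ℂ) := by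
    push_cast
    rw [← trace_eq_sum_eig hρ.1.1, hρ.2]
  exact_mod_cast h

lemma one_side [Nonempty n] (ω τ : Matrix n n ℂ) (hω : IsState ω) (hτ : IsState τ)
    (h : trD ω τ ≤ 1) :
    vnEnt ω - vnEnt τ ≤ trD ω τ * Real.logb 2 (Fintype.card n) + binEnt' (trD ω τ) := by
  have hωH : ω.IsHermitian := hω.1.1
  have hτH : τ.IsHermitian := hτ.1.1
  have hdH : (ω - τ).IsHermitian := hωH.sub hτH
  set U := hτH.eigenvectorUnitary with hU
  set p : n → ℝ := fun i => ((star (U : Matrix n n ℂ) * ω * (U : Matrix n n ℂ)) i i).re with hp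
  set q : n → ℝ := fun i => hτH.eigenvalues i with hq
  obtain ⟨w, hw0, hwrow, hwcol, hwdiag⟩ := diag_entries hωH U
  have hlw0 : ∀ j, 0 ≤ hωH.eigenvalues j := fun j => hω.1.eigenvalues_nonneg j
  have hlw1 : ∑ j, hωH.eigenvalues j = 1 := sum_eigenvalues_eq_one hω
  have hlt0 : ∀ j, 0 ≤ hτH.eigenvalues j := fun j => hτ.1.eigenvalues_nonneg j
  have hlt1 : ∑ j, hτH.eigenvalues j = 1 := sum_eigenvalues_eq_one hτ
  -- p properties
  have hp0 : ∀ i, 0 ≤ p i := by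
    intro i
    rw [hp]; dsimp only
    rw [hwdiag i]
    exact Finset.sum_nonneg fun j _ => mul_nonneg (hw0 i j) (hlw0 j)
  have hp1 : ∑ i, p i = 1 := by
    simp only [hp]
    rw [Finset.sum_congr rfl (fun i _ => hwdiag i), Finset.sum_comm]
    rw [Finset.sum_congr rfl (fun j (_ : j ∈ Finset.univ) => (Finset.sum_mul ..).symm)]
    rw [Finset.sum_congr rfl (fun j (_ : j ∈ Finset.univ) => by rw [hwcol j, one_mul])]
    exact hlw1
  -- entropy comparisons
  have hHω : vnEnt ω ≤ ∑ i, ent2 (p i) := by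
    rw [vnEnt_eq hωH]
    calc ∑ j, ent2 (hωH.eigenvalues j)
        = ∑ j, (∑ i, w i j) * ent2 (hωH.eigenvalues j) := by
          apply Finset.sum_congr rfl; intro j _; rw [hwcol j, one_mul]
      _ = ∑ i, ∑ j, w i j * ent2 (hωH.eigenvalues j) := by
          rw [Finset.sum_comm]
          apply Finset.sum_congr rfl; intro j _; rw [Finset.sum_mul]
      _ ≤ ∑ i, ent2 (p i) := by
          apply Finset.sum_le_sum
          intro i _
          have hJ := concaveOn_ent2.le_map_sum (t := Finset.univ) (w := w i)
            (p := hωH.eigenvalues) (fun j _ => hw0 i j) (hwrow i) (fun j _ => hlw0 j)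
          have harg : ∑ j, w i j • hωH.eigenvalues j = p i := by
            rw [hp]; dsimp only; rw [hwdiag i]; simp [smul_eq_mul]
          rw [harg] at hJ
          simpa [smul_eq_mul] using hJ
  have hHτ : vnEnt τ = ∑ i, ent2 (q i) := vnEnt_eq hτH
  -- total variation bound
  have hqdiag : ∀ i, q i = ((star (U : Matrix n n ℂ) * τ * (U : Matrix n n ℂ)) i i).re := by
    intro i
    rw [hU]
    rw [star_mul_self_mul_eq_diagonal' hτH]
    simp [hq]
  have htv : ∑ i, |p i - q i| ≤ 2 * trD ω τ := by
    obtain ⟨w', hw'0, hw'row, hw'col, hw'diag⟩ := diag_entries hdH U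
    have hpq : ∀ i, p i - q i = ∑ j, w' i j * hdH.eigenvalues j := by
      intro i
      rw [hp, hqdiag i]; dsimp only
      rw [← hw'diag i]
      have : star (U : Matrix n n ℂ) * (ω - τ) * (U : Matrix n n ℂ)
          = star (U : Matrix n n ℂ) * ω * (U : Matrix n n ℂ)
            - star (U : Matrix n n ℂ) * τ * (U : Matrix n n ℂ) := by
        rw [Matrix.mul_sub, Matrix.sub_mul]
      rw [this, Matrix.sub_apply, Complex.sub_re]
    have hstep : ∀ i, |p i - q i| ≤ ∑ j, w' i j * |hdH.eigenvalues j| := by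
      intro i
      rw [hpq i]
      calc |∑ j, w' i j * hdH.eigenvalues j| ≤ ∑ j, |w' i j * hdH.eigenvalues j| :=
            Finset.abs_sum_le_sum_abs _ _
        _ = ∑ j, w' i j * |hdH.eigenvalues j| := by
            apply Finset.sum_congr rfl; intro j _
            rw [abs_mul, abs_of_nonneg (hw'0 i j)]
    calc ∑ i, |p i - q i| ≤ ∑ i, ∑ j, w' i j * |hdH.eigenvalues j| :=
          Finset.sum_le_sum fun i _ => hstep i
      _ = ∑ j, (∑ i, w' i j) * |hdH.eigenvalues j| := by
          rw [Finset.sum_comm]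
          apply Finset.sum_congr rfl; intro j _; rw [Finset.sum_mul]
      _ = ∑ j, |hdH.eigenvalues j| := by
          apply Finset.sum_congr rfl; intro j _; rw [hw'col j, one_mul]
      _ = 2 * trD ω τ := by rw [trD_herm ω τ hdH]; ring
  -- classical bound
  have hclass := classical_final p q hp0 (fun i => hlt0 i) hp1 hlt1
    (T := trD ω τ) (by linarith) h
  calc vnEnt ω - vnEnt τ ≤ ∑ i, ent2 (p i) - ∑ i, ent2 (q i) := by
        rw [hHτ]; linarith
    _ ≤ trD ω τ * Real.logb 2 (Fintype.card n) + binEnt' (trD ω τ) := hclass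

lemma trD_symm (ω τ : Matrix n n ℂ) : trD τ ω = trD ω τ := by
  rw [trD, trD, traceNorm, traceNorm]
  rw [show τ - ω = -(ω - τ) by abel, Matrix.conjTranspose_neg, Matrix.neg_mul, Matrix.mul_neg,
    neg_neg]

lemma binEnt_eq (x : ℝ) : binEnt x = binEnt' x := by
  rw [binEnt, binEnt', ent2, ent2]
  ring

end FA

open QD Matrix in
/-- Fannes–Audenaert continuity bound
`|H(ω) - H(τ)| ≤ (1/2)‖ω-τ‖₁ log d + h((1/2)‖ω-τ‖₁)`. -/
theorem fannes_audenaert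
    {n : Type*} [Fintype n] [DecidableEq n] (ω τ : Matrix n n ℂ)
    (hω : IsState ω) (hτ : IsState τ) (h : trD ω τ ≤ 1) :
    |vnEnt ω - vnEnt τ| ≤
      trD ω τ * Real.logb 2 (Fintype.card n) + binEnt (trD ω τ) := by
  open FA in
  rcases isEmpty_or_nonempty n with hn | hn
  · exfalso
    have := hτ.2
    rw [Matrix.trace] at this
    simp [Finset.univ_eq_empty] at this
  · rw [FA.binEnt_eq, abs_sub_le_iff]
    constructor
    · exact FA.one_side ω τ hω hτ h
    · have := FA.one_side τ ω hτ hω (by rw [FA.trD_symm]; exact h)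
      rwa [FA.trD_symm ω τ] at this
end
end
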